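/- arXiv:2109.01221 — 6 statements merged into one kernel-verified Lean document; each statement's English description precedes it below -/
import Mathlib

section
/- Let D be a finite nonempty set of integers. There exists a signed tree (T,s), where T is a finite tree with at least two vertices, that realizes D if and only if 1 ∈ D or −1 ∈ D. -/
/-- A signed tree: a finite tree (on vertex type `Fin n`) together with an
assignment of a sign to each possible edge (`true` = positive, `false` = negative). -/
structure SignedTree where
  n : ℕ
  G : SimpleGraph (Fin n)
  adjDec : DecidableRel G.Adj
  isTree : G.IsTree
  sgn : Sym2 (Fin n) → Bool

namespace SignedTree

/-- The (unsigned) degree of a vertex in the underlying tree. -/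
def deg (T : SignedTree) (v : Fin T.n) : ℕ :=
  letI := T.adjDec
  T.G.degree v

/-- The signed degree of a vertex: the number of positive edges incident to it
minus the number of negative edges incident to it. -/
def sdeg (T : SignedTree) (v : Fin T.n) : ℤ :=
  letI := T.adjDec
  ((((T.G.neighborFinset v).filter fun w => T.sgn s(v, w) = true).card : ℤ)) -
  ((((T.G.neighborFinset v).filter fun w => T.sgn s(v, w) = false).card : ℤ))

/-- The signed tree `T` realizes the set `D` if `D` is exactly the set of signed
degrees of the vertices of `T`. -/
def Realizes (T : SignedTree) (D : Set ℤ) : Prop :=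
  D = Set.range T.sdeg

end SignedTree


def signVal (b : Bool) : ℤ := if b then 1 else -1

section Master

variable {m : ℕ} (r : Fin m) (p : Fin m → Fin m) (hgt : Fin m → ℕ)
variable (hp : ∀ v, v ≠ r → hgt (p v) < hgt v)

def pgraph : SimpleGraph (Fin m) where
  Adj i j := (i ≠ r ∧ p i = j) ∨ (j ≠ r ∧ p j = i)
  symm := ⟨fun i j hij => hij.symm⟩
  loopless := ⟨fun i hii => by
    rcases hii with ⟨hi, hpi⟩ | ⟨hi, hpi⟩ <;>
      exact absurd (hpi ▸ hp i hi) (lt_irrefl _)⟩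

def pdec : DecidableRel (pgraph r p hgt hp).Adj :=
  fun i j => inferInstanceAs (Decidable ((i ≠ r ∧ p i = j) ∨ (j ≠ r ∧ p j = i)))

lemma pgraph_connected : (pgraph r p hgt hp).Connected := by
  have key : ∀ N (v : Fin m), hgt v ≤ N → (pgraph r p hgt hp).Reachable v r := by
    intro N
    induction N with
    | zero =>
      intro v hv
      by_cases hvr : v = r
      · subst hvr; exact SimpleGraph.Reachable.refl _
      · exact absurd (hp v hvr) (by omega)
    | succ N ih =>
      intro v hv
      by_cases hvr : v = r
      · subst hvr; exact SimpleGraph.Reachable.refl _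
      · have hadj : (pgraph r p hgt hp).Adj v (p v) := Or.inl ⟨hvr, rfl⟩
        exact hadj.reachable.trans (ih (p v) (by have := hp v hvr; omega))
  haveI : Nonempty (Fin m) := ⟨r⟩
  exact SimpleGraph.Connected.mk
    (fun a b => (key (hgt a) a le_rfl).trans (key (hgt b) b le_rfl).symm)

lemma pgraph_acyclic : (pgraph r p hgt hp).IsAcyclic := by
  intro v c hc
  obtain ⟨x, hxs, hxmax⟩ := Finset.exists_max_image c.support.toFinset hgt
    ⟨v, by simp [SimpleGraph.Walk.start_mem_support]⟩
  replace hxmax : ∀ y ∈ c.support, hgt y ≤ hgt x := fun y hy => hxmax y (by simpa using hy)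
  replace hxs : x ∈ c.support := by simpa using hxs
  have hc' : (c.rotate x hxs).IsCycle := hc.rotate hxs
  have hsupp : ∀ y ∈ (c.rotate x hxs).support, hgt y ≤ hgt x := by
    intro y hy
    rw [SimpleGraph.Walk.support_eq_cons] at hy
    rcases List.mem_cons.mp hy with rfl | hy
    · exact le_rfl
    · exact hxmax y (List.mem_of_mem_tail
        ((SimpleGraph.Walk.support_rotate c x hxs).mem_iff.mp hy))
  revert hc' hsupp
  generalize c.rotate x hxs = c'
  intro hc' hsupp
  have hnbr : ∀ w, (pgraph r p hgt hp).Adj x w → w ∈ c'.support → x ≠ r ∧ w = p x := by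
    rintro w (⟨hxr, hpx⟩ | ⟨hwr, hpw⟩) hw
    · exact ⟨hxr, hpx.symm⟩
    · exact absurd (hpw ▸ hp w hwr) (by have := hsupp w hw; omega)
  cases c' with
  | nil => exact hc'.ne_nil rfl
  | cons a q =>
    rename_i y
    obtain ⟨hq, hnotin⟩ := (SimpleGraph.Walk.cons_isCycle_iff _ _).mp hc'
    have hy : y ∈ (SimpleGraph.Walk.cons a q).support := by
      simp [SimpleGraph.Walk.support_cons, SimpleGraph.Walk.start_mem_support]
    obtain ⟨hxr, rfl⟩ := hnbr y a hy
    have hne : x ≠ p x := by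
      intro hxx
      have h3 := hp x hxr
      rw [← hxx] at h3
      omega
    obtain ⟨w, a', q'', hq''⟩ := SimpleGraph.Walk.exists_eq_cons_of_ne hne q.reverse
    have hw : w ∈ (SimpleGraph.Walk.cons a q).support := by
      have h1 : w ∈ q.reverse.support := by
        rw [hq'', SimpleGraph.Walk.support_cons]
        exact List.mem_cons_of_mem _ (SimpleGraph.Walk.start_mem_support q'')
      rw [SimpleGraph.Walk.support_reverse, List.mem_reverse] at h1
      rw [SimpleGraph.Walk.support_cons]
      exact List.mem_cons_of_mem _ h1
    obtain ⟨-, rfl⟩ := hnbr w a' hw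
    apply hnotin
    have h2 : s(x, p x) ∈ q.reverse.edges := by
      rw [hq'', SimpleGraph.Walk.edges_cons]
      exact List.mem_cons_self
    rwa [SimpleGraph.Walk.edges_reverse, List.mem_reverse] at h2

end Master

section Master2

lemma sum_signVal {α : Type*} (S : Finset α) (P : α → Bool) :
    ∑ w ∈ S, signVal (P w) =
      ((S.filter fun w => P w = true).card : ℤ) - ((S.filter fun w => P w = false).card : ℤ) := by
  have h : ∀ b, signVal b = (if b = true then (1:ℤ) else 0) - (if b = false then (1:ℤ) else 0) := by
    decide
  simp_rw [h, Finset.sum_sub_distrib, Finset.sum_boole]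

variable {V : Type*} [Fintype V] [DecidableEq V]

/-- the intended signed degree of `v` -/
def wval (r : V) (p : V → V) (σ : V → Bool) (v : V) : ℤ :=
  (if v = r then 0 else signVal (σ v)) +
    ∑ i ∈ Finset.univ.filter (fun i => i ≠ r ∧ p i = v), signVal (σ i)

end Master2

section Master3

variable {m : ℕ} (r : Fin m) (p : Fin m → Fin m) (hgt : Fin m → ℕ)
variable (hp : ∀ v, v ≠ r → hgt (p v) < hgt v) (σ : Fin m → Bool)

include hp in
lemma child_edge_inj {v w : Fin m} (hv : v ≠ r) (hw : w ≠ r)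
    (h : s(v, p v) = s(w, p w)) : v = w := by
  rw [Sym2.eq_iff] at h
  rcases h with ⟨h1, h2⟩ | ⟨h1, h2⟩
  · exact h1
  · exfalso
    have l1 := hp v hv
    have l2 := hp w hw
    rw [h2] at l1
    rw [← h1] at l2
    omega

def psgn : Sym2 (Fin m) → Bool :=
  fun e => decide (∃ w, w ≠ r ∧ e = s(w, p w) ∧ σ w = true)

include hp in
lemma psgn_edge {v : Fin m} (hv : v ≠ r) : psgn r p σ s(v, p v) = σ v := by
  cases hσ : σ v with
  | true =>
    apply decide_eq_true
    exact ⟨v, hv, rfl, hσ⟩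
  | false =>
    apply decide_eq_false
    rintro ⟨w, hw, hew, hσw⟩
    rw [child_edge_inj r p hgt hp hv hw hew] at hσ
    rw [hσ] at hσw
    exact absurd hσw (by simp)

def mkTree : SignedTree :=
  ⟨m, pgraph r p hgt hp, pdec r p hgt hp,
    ⟨pgraph_connected r p hgt hp, pgraph_acyclic r p hgt hp⟩, psgn r p σ⟩

lemma mkTree_neighborFinset (v : Fin m) :
    letI := pdec r p hgt hp
    (pgraph r p hgt hp).neighborFinset v =
      (if v = r then ∅ else {p v}) ∪ Finset.univ.filter (fun i => i ≠ r ∧ p i = v) := by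
  letI := pdec r p hgt hp
  ext i
  rw [SimpleGraph.mem_neighborFinset]
  show ((v ≠ r ∧ p v = i) ∨ (i ≠ r ∧ p i = v)) ↔ _
  by_cases hv : v = r <;> simp [hv, eq_comm, and_comm]

lemma mkTree_sdeg (v : Fin m) :
    (mkTree r p hgt hp σ).sdeg v = wval r p σ v := by
  letI := pdec r p hgt hp
  have hs : (mkTree r p hgt hp σ).sdeg v =
      ∑ w ∈ (pgraph r p hgt hp).neighborFinset v, signVal (psgn r p σ s(v, w)) := by
    rw [sum_signVal]
    rfl
  rw [hs, mkTree_neighborFinset r p hgt hp]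
  have hdisj : Disjoint (if v = r then (∅ : Finset (Fin m)) else {p v})
      (Finset.univ.filter (fun i => i ≠ r ∧ p i = v)) := by
    by_cases hv : v = r
    · simp [hv]
    · simp only [hv, if_false]
      rw [Finset.disjoint_left]
      rintro a ha hb
      rw [Finset.mem_singleton] at ha
      obtain ⟨har, hpa⟩ := (Finset.mem_filter.mp hb).2
      subst ha
      have l1 := hp v hv
      have l2 := hp (p v) har
      rw [hpa] at l2
      omega
  rw [Finset.sum_union hdisj, wval]
  congr 1
  · by_cases hv : v = r
    · simp [hv]
    · simp only [hv, if_false, Finset.sum_singleton]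
      rw [psgn_edge r p hgt hp σ hv]
  · apply Finset.sum_congr rfl
    intro i hi
    obtain ⟨hir, hpi⟩ := (Finset.mem_filter.mp hi).2
    congr 1
    rw [← hpi, Sym2.eq_swap]
    exact psgn_edge r p hgt hp σ hir

end Master3

section Master4

variable {V : Type*} [Fintype V] [DecidableEq V]

lemma realize_master (r : V) (p : V → V) (hgt : V → ℕ)
    (hp : ∀ v, v ≠ r → hgt (p v) < hgt v) (σ : V → Bool) :
    ∃ T : SignedTree, T.n = Fintype.card V ∧ Set.range T.sdeg = Set.range (wval r p σ) := by
  set e := Fintype.equivFin V with he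
  set m := Fintype.card V
  have hp' : ∀ i : Fin m, i ≠ e r → hgt (e.symm (e (p (e.symm i)))) < hgt (e.symm i) := by
    intro i hi
    simp only [Equiv.symm_apply_apply]
    exact hp (e.symm i) (fun h => hi (by rw [← h, Equiv.apply_symm_apply]))
  refine ⟨mkTree (e r) (fun i => e (p (e.symm i))) (fun i => hgt (e.symm i)) hp'
    (fun i => σ (e.symm i)), rfl, ?_⟩
  have hw : ∀ v : V, (mkTree (e r) (fun i => e (p (e.symm i))) (fun i => hgt (e.symm i)) hp'
      (fun i => σ (e.symm i))).sdeg (e v) = wval r p σ v := by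
    intro v
    rw [mkTree_sdeg]
    unfold wval
    congr 1
    · simp [Equiv.apply_eq_iff_eq]
    · refine Finset.sum_equiv e.symm ?_ ?_
      · intro i
        simp only [Finset.mem_filter, Finset.mem_univ, true_and]
        constructor
        · rintro ⟨h1, h2⟩
          refine ⟨fun h => h1 (by rw [← h, Equiv.apply_symm_apply]), ?_⟩
          have := congrArg e.symm h2
          simpa using this
        · rintro ⟨h1, h2⟩
          refine ⟨fun h => h1 (by rw [h, Equiv.symm_apply_apply]), ?_⟩
          have := congrArg e h2
          simpa using this
      · intro i _
        rfl
  ext x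
  constructor
  · rintro ⟨i, rfl⟩
    exact ⟨e.symm i, by rw [← hw (e.symm i)]; exact congrArg _ (e.apply_symm_apply i)⟩
  · rintro ⟨v, rfl⟩
    exact ⟨e v, hw v⟩

end Master4

section Construct

variable (k : ℕ) (d : Fin (k+1) → ℤ)

/-- branch index: `inl` are value branches, `inr` are gadget branches -/
abbrev Br := Fin (k+1) ⊕ Fin k

/-- sign of the edge from the root to branch head -/
def bsgn1 : Br k → Bool
  | .inl _ => true
  | .inr _ => false

/-- number of children of a branch head -/
def bnum : Br k → ℕ
  | .inl i => if 2 ≤ d i then (d i - 1).toNat else (1 - d i).toNat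
  | .inr _ => 2

/-- sign of the edges from a branch head to its children -/
def bsgn2 : Br k → Bool
  | .inl i => decide (2 ≤ d i)
  | .inr _ => true

/-- number of grandchildren below each child of a branch head -/
def bl (t : Br k) : ℕ := if bsgn2 k d t then 0 else 2

/-- the vertex set of the constructed tree -/
abbrev CVert := Option ((t : Br k) × Option ((_ : Fin (bnum k d t)) × Option (Fin (bl k d t))))

instance instDEqCVert : DecidableEq (CVert k d) :=
  inferInstanceAs (DecidableEq (Option _))

/-- the parent function -/
def cp : CVert k d → CVert k d
  | none => none
  | some ⟨_, none⟩ => none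
  | some ⟨t, some ⟨_, none⟩⟩ => some ⟨t, none⟩
  | some ⟨t, some ⟨j, some _⟩⟩ => some ⟨t, some ⟨j, none⟩⟩

/-- depth -/
def chgt : CVert k d → ℕ
  | none => 0
  | some ⟨_, none⟩ => 1
  | some ⟨_, some ⟨_, none⟩⟩ => 2
  | some ⟨_, some ⟨_, some _⟩⟩ => 3

/-- the signs -/
def cσ : CVert k d → Bool
  | none => true
  | some ⟨t, none⟩ => bsgn1 k t
  | some ⟨t, some ⟨_, none⟩⟩ => bsgn2 k d t
  | some ⟨_, some ⟨_, some _⟩⟩ => true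

lemma chp : ∀ v : CVert k d, v ≠ none → chgt k d (cp k d v) < chgt k d v := by
  rintro (_ | ⟨t, _ | ⟨j, _ | x⟩⟩) h <;> simp [cp, chgt] at h ⊢

end Construct

section Construct2

variable (k : ℕ) (d : Fin (k+1) → ℤ)

lemma croot_children :
    Finset.univ.filter (fun i : CVert k d => i ≠ none ∧ cp k d i = none)
      = Finset.univ.image (fun t : Br k => (some ⟨t, none⟩ : CVert k d)) := by
  ext x
  simp only [Finset.mem_filter, Finset.mem_univ, true_and, Finset.mem_image]
  rcases x with _ | ⟨t, _ | ⟨j, _ | y⟩⟩ <;> simp [cp]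

lemma chead_children (t : Br k) :
    Finset.univ.filter (fun i : CVert k d => i ≠ none ∧ cp k d i = some ⟨t, none⟩)
      = Finset.univ.image
          (fun j : Fin (bnum k d t) => (some ⟨t, some ⟨j, none⟩⟩ : CVert k d)) := by
  ext x
  simp only [Finset.mem_filter, Finset.mem_univ, true_and, Finset.mem_image]
  constructor
  · rintro ⟨hne, hcp⟩
    rcases x with _ | ⟨t', _ | ⟨j', _ | y'⟩⟩
    · exact absurd rfl hne
    · have := congrArg (chgt k d) hcp; simp [cp, chgt] at this
    · simp only [cp, Option.some.injEq] at hcp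
      obtain ⟨rfl, -⟩ := Sigma.mk.inj_iff.mp hcp
      exact ⟨j', rfl⟩
    · have := congrArg (chgt k d) hcp; simp [cp, chgt] at this
  · rintro ⟨j', rfl⟩
    exact ⟨by simp, by simp [cp]⟩

lemma cmid_children (t : Br k) (j : Fin (bnum k d t)) :
    Finset.univ.filter (fun i : CVert k d => i ≠ none ∧ cp k d i = some ⟨t, some ⟨j, none⟩⟩)
      = Finset.univ.image
          (fun y : Fin (bl k d t) => (some ⟨t, some ⟨j, some y⟩⟩ : CVert k d)) := by
  ext x
  simp only [Finset.mem_filter, Finset.mem_univ, true_and, Finset.mem_image]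
  constructor
  · rintro ⟨hne, hcp⟩
    rcases x with _ | ⟨t', _ | ⟨j', _ | y'⟩⟩
    · exact absurd rfl hne
    · have := congrArg (chgt k d) hcp; simp [cp, chgt] at this
    · have := congrArg (chgt k d) hcp; simp [cp, chgt] at this
    · simp only [cp, Option.some.injEq] at hcp
      obtain ⟨rfl, hh⟩ := Sigma.mk.inj_iff.mp hcp
      have h2 := eq_of_heq hh
      simp only [Option.some.injEq] at h2
      obtain ⟨rfl, -⟩ := Sigma.mk.inj_iff.mp h2
      exact ⟨y', rfl⟩
  · rintro ⟨y', rfl⟩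
    exact ⟨by simp, by simp [cp]⟩

lemma cleaf_children (t : Br k) (j : Fin (bnum k d t)) (y : Fin (bl k d t)) :
    Finset.univ.filter (fun i : CVert k d => i ≠ none ∧ cp k d i = some ⟨t, some ⟨j, some y⟩⟩)
      = ∅ := by
  ext x
  simp only [Finset.mem_filter, Finset.mem_univ, true_and, Finset.notMem_empty, iff_false,
    not_and]
  intro hne hcp
  rcases x with _ | ⟨t', _ | ⟨j', _ | y'⟩⟩
  · exact absurd rfl hne
  · have := congrArg (chgt k d) hcp; simp [cp, chgt] at this
  · have := congrArg (chgt k d) hcp; simp [cp, chgt] at this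
  · have := congrArg (chgt k d) hcp; simp [cp, chgt] at this

end Construct2

section Construct3

variable (k : ℕ) (d : Fin (k+1) → ℤ)

lemma wval_root : wval (none : CVert k d) (cp k d) (cσ k d) none = 1 := by
  unfold wval
  rw [if_pos rfl, croot_children, Finset.sum_image
    (fun a _ b _ h => (Sigma.mk.inj_iff.mp (Option.some.inj h)).1)]
  have : ∀ t : Br k, cσ k d (some ⟨t, none⟩) = bsgn1 k t := fun t => rfl
  simp only [this, zero_add]
  rw [Fintype.sum_sum_type]
  simp [bsgn1, signVal, Finset.sum_const]

lemma wval_head (t : Br k) :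
    wval (none : CVert k d) (cp k d) (cσ k d) (some ⟨t, none⟩)
      = signVal (bsgn1 k t) + (bnum k d t : ℤ) * signVal (bsgn2 k d t) := by
  unfold wval
  rw [if_neg (by simp), chead_children, Finset.sum_image
    (fun a _ b _ h => by
      have := (Sigma.mk.inj_iff.mp (Option.some.inj h)).2
      have h2 := eq_of_heq this
      exact (Sigma.mk.inj_iff.mp (Option.some.inj h2)).1)]
  have : ∀ j : Fin (bnum k d t), cσ k d (some ⟨t, some ⟨j, none⟩⟩) = bsgn2 k d t :=
    fun j => rfl
  simp only [this]
  rw [Finset.sum_const]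
  simp [mul_comm]
  rfl

lemma wval_head_inl (i : Fin (k+1)) :
    wval (none : CVert k d) (cp k d) (cσ k d) (some ⟨.inl i, none⟩) = d i := by
  rw [wval_head]
  by_cases h : 2 ≤ d i <;> simp [bsgn1, bnum, bsgn2, signVal, h] <;> omega

lemma wval_head_inr (i : Fin k) :
    wval (none : CVert k d) (cp k d) (cσ k d) (some ⟨.inr i, none⟩) = 1 := by
  rw [wval_head]
  simp [bsgn1, bnum, bsgn2, signVal]

lemma wval_mid (t : Br k) (j : Fin (bnum k d t)) :
    wval (none : CVert k d) (cp k d) (cσ k d) (some ⟨t, some ⟨j, none⟩⟩) = 1 := by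
  unfold wval
  rw [if_neg (by simp), cmid_children, Finset.sum_image
    (fun a _ b _ h => by
      have := (Sigma.mk.inj_iff.mp (Option.some.inj h)).2
      have h2 := eq_of_heq this
      have := (Sigma.mk.inj_iff.mp (Option.some.inj h2)).2
      have h3 := eq_of_heq this
      exact Option.some.inj h3)]
  have hσ : cσ k d (some ⟨t, some ⟨j, none⟩⟩) = bsgn2 k d t := rfl
  have hσ2 : ∀ y : Fin (bl k d t), cσ k d (some ⟨t, some ⟨j, some y⟩⟩) = true := fun y => rfl
  simp only [hσ, hσ2]
  rw [Finset.sum_const]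
  rw [Finset.card_univ, Fintype.card_fin]
  cases h : bsgn2 k d t <;> simp [bl, signVal, h]

lemma wval_leaf (t : Br k) (j : Fin (bnum k d t)) (y : Fin (bl k d t)) :
    wval (none : CVert k d) (cp k d) (cσ k d) (some ⟨t, some ⟨j, some y⟩⟩) = 1 := by
  unfold wval
  rw [if_neg (by simp), cleaf_children, Finset.sum_empty]
  have hσ : cσ k d (some ⟨t, some ⟨j, some y⟩⟩) = true := rfl
  simp [hσ, signVal]

lemma range_wval :
    Set.range (wval (none : CVert k d) (cp k d) (cσ k d)) = insert 1 (Set.range d) := by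
  ext x
  constructor
  · rintro ⟨v, rfl⟩
    rcases v with _ | ⟨t | t, _ | ⟨j, _ | y⟩⟩
    · rw [wval_root]; exact Set.mem_insert _ _
    · rw [wval_head_inl]; exact Set.mem_insert_of_mem _ ⟨t, rfl⟩
    · rw [wval_mid]; exact Set.mem_insert _ _
    · rw [wval_leaf]; exact Set.mem_insert _ _
    · rw [wval_head_inr]; exact Set.mem_insert _ _
    · rw [wval_mid]; exact Set.mem_insert _ _
    · rw [wval_leaf]; exact Set.mem_insert _ _
  · rintro (rfl | ⟨i, rfl⟩)
    · exact ⟨none, wval_root k d⟩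
    · exact ⟨some ⟨.inl i, none⟩, wval_head_inl k d i⟩

end Construct3

section Assemble

lemma exists_signedTree_of_one_mem (D : Set ℤ) (hfin : D.Finite) (h1 : (1:ℤ) ∈ D) :
    ∃ T : SignedTree, 2 ≤ T.n ∧ T.Realizes D := by
  obtain ⟨k, hk⟩ : ∃ k, hfin.toFinset.card = k + 1 := by
    have hne : hfin.toFinset.Nonempty := ⟨1, by simpa using h1⟩
    have := Finset.card_pos.mpr hne
    exact ⟨hfin.toFinset.card - 1, by omega⟩
  let e : hfin.toFinset ≃ Fin (k+1) := hfin.toFinset.equivFin.trans (finCongr hk)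
  let d : Fin (k+1) → ℤ := fun i => ((e.symm i : hfin.toFinset) : ℤ)
  have hrange : insert 1 (Set.range d) = D := by
    apply Set.Subset.antisymm
    · rintro x (rfl | ⟨i, rfl⟩)
      · exact h1
      · exact (Set.Finite.mem_toFinset hfin).mp (e.symm i).2
    · intro x hx
      refine Set.mem_insert_iff.mpr
        (Or.inr ⟨e ⟨x, (Set.Finite.mem_toFinset hfin).mpr hx⟩, ?_⟩)
      simp [d]
  obtain ⟨T, hTn, hTr⟩ :=
    realize_master (none : CVert k d) (cp k d) (chgt k d) (chp k d) (cσ k d)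
  refine ⟨T, ?_, ?_⟩
  · rw [hTn]
    exact Fintype.one_lt_card_iff_nontrivial.mpr
      ⟨⟨none, some ⟨Sum.inl 0, none⟩, by simp⟩⟩
  · unfold SignedTree.Realizes
    rw [hTr, range_wval, hrange]

def SignedTree.flip (T : SignedTree) : SignedTree :=
  ⟨T.n, T.G, T.adjDec, T.isTree, fun e => !T.sgn e⟩

lemma SignedTree.flip_sdeg (T : SignedTree) (v : Fin T.n) :
    T.flip.sdeg v = - T.sdeg v := by
  show _ - _ = _
  unfold SignedTree.sdeg
  simp only [SignedTree.flip, Bool.not_eq_true', Bool.not_eq_false']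
  exact (neg_sub (_ : ℤ) _).symm

end Assemble

/-- `diamOfSet D` is the minimum diameter of the underlying tree over all
signed trees realizing `D`. -/
noncomputable def diamOfSet (D : Set ℤ) : ℕ :=
  sInf {k : ℕ | ∃ T : SignedTree, T.Realizes D ∧ T.G.diam = k}

/-- `orderOfSet D` is the minimum number of vertices of the underlying tree over
all signed trees realizing `D`. -/
noncomputable def orderOfSet (D : Set ℤ) : ℕ :=
  sInf {k : ℕ | ∃ T : SignedTree, T.Realizes D ∧ T.n = k}

/-- A finite nonempty set `D` of integers is realized by some signed
tree with at least two vertices iff `1 ∈ D` or `-1 ∈ D`. -/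
theorem stmt_0 (D : Set ℤ) (hfin : D.Finite) (hne : D.Nonempty) :
    (∃ T : SignedTree, 2 ≤ T.n ∧ T.Realizes D) ↔ ((1 : ℤ) ∈ D ∨ (-1 : ℤ) ∈ D) := by
  constructor
  · rintro ⟨T, h2, hreal⟩
    letI := T.adjDec
    have hconn := T.isTree.isConnected
    have hdeg1 : ∀ v : Fin T.n, 0 < T.G.degree v := by
      intro v
      rw [SimpleGraph.degree_pos_iff_exists_adj]
      obtain ⟨w, -, hw⟩ := Finset.exists_mem_ne
        (s := (Finset.univ : Finset (Fin T.n))) (by rw [Finset.card_univ, Fintype.card_fin]; omega) v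
      obtain ⟨W⟩ := hconn.preconnected v w
      cases W with
      | nil => exact absurd rfl hw
      | cons a _ => exact ⟨_, a⟩
    have hsum := T.G.sum_degrees_eq_twice_card_edges
    have hcard := T.isTree.card_edgeFinset
    have hleaf : ∃ v : Fin T.n, T.G.degree v = 1 := by
      by_contra hno
      push_neg at hno
      have hge : ∀ v ∈ (Finset.univ : Finset (Fin T.n)), 2 ≤ T.G.degree v := by
        intro v _
        have := hdeg1 v
        have := hno v
        omega
      have := Finset.card_nsmul_le_sum Finset.univ (fun v => T.G.degree v) 2 hge
      simp only [Finset.card_univ, Fintype.card_fin, smul_eq_mul] at this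
      rw [hsum] at this
      rw [Fintype.card_fin] at hcard
      omega
    obtain ⟨v, hv⟩ := hleaf
    have hsplit := Finset.card_filter_add_card_filter_not
      (s := T.G.neighborFinset v) (p := fun w => T.sgn s(v, w) = true)
    rw [SimpleGraph.card_neighborFinset_eq_degree, hv] at hsplit
    have hfeq : (T.G.neighborFinset v).filter (fun w => ¬ T.sgn s(v, w) = true)
        = (T.G.neighborFinset v).filter (fun w => T.sgn s(v, w) = false) := by
      apply Finset.filter_congr
      intro w _
      simp [Bool.not_eq_true]
    rw [hfeq] at hsplit
    have hsv : T.sdeg v ∈ D := by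
      rw [hreal]
      exact Set.mem_range_self v
    have hsd : T.sdeg v =
        (((T.G.neighborFinset v).filter fun w => T.sgn s(v, w) = true).card : ℤ) -
        (((T.G.neighborFinset v).filter fun w => T.sgn s(v, w) = false).card : ℤ) := rfl
    rcases Nat.eq_zero_or_pos ((T.G.neighborFinset v).filter
        (fun w => T.sgn s(v, w) = false)).card with h0 | hpos
    · left
      have : T.sdeg v = 1 := by rw [hsd]; omega
      rwa [← this]
    · right
      have : T.sdeg v = -1 := by rw [hsd]; omega
      rwa [← this]
  · rintro (h1 | hneg)
    · exact exists_signedTree_of_one_mem D hfin h1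
    · obtain ⟨T, h2, hreal⟩ := exists_signedTree_of_one_mem ((fun x => -x) '' D)
        (hfin.image _) ⟨-1, hneg, by norm_num⟩
      refine ⟨T.flip, h2, ?_⟩
      unfold SignedTree.Realizes at hreal ⊢
      have hflip : T.flip.sdeg = (fun x => -x) ∘ T.sdeg := funext (SignedTree.flip_sdeg T)
      rw [show Set.range T.flip.sdeg = (fun x => -x) '' Set.range T.sdeg by rw [← Set.range_comp]; exact congrArg Set.range hflip, ← hreal, ← Set.image_comp]
      ext x
      simp
end

section
/- Let (T,s) be a signed tree whose signed degree set is D, and suppose −1 ∉ D. If v is a vertex of T with negative signed degree, then v is not a pendant vertex and v is not adjacent to any limiting pendant vertex of T. -/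
/-- A longest path of the underlying tree of `T`: a path whose length is maximal
among all paths. -/
def SignedTree.IsLongestPath (T : SignedTree) {u v : Fin T.n} (p : T.G.Walk u v) : Prop :=
  p.IsPath ∧ ∀ (a b : Fin T.n) (q : T.G.Walk a b), q.IsPath → q.length ≤ p.length

/-- A limiting pendant vertex: a pendant vertex that is an endpoint of some
longest path. -/
def SignedTree.IsLimitingPendant (T : SignedTree) (v : Fin T.n) : Prop :=
  T.deg v = 1 ∧ ∃ (u : Fin T.n) (p : T.G.Walk u v), T.IsLongestPath p

open SimpleGraph Finset in
/-- Auxiliary: positive plus negative count equals the degree. -/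
lemma SignedTree.card_filter_add (T : SignedTree) (v : Fin T.n) :
    letI := T.adjDec
    (((T.G.neighborFinset v).filter fun w => T.sgn s(v, w) = true).card) +
    (((T.G.neighborFinset v).filter fun w => T.sgn s(v, w) = false).card) = T.deg v := by
  letI := T.adjDec
  have h := Finset.card_filter_add_card_filter_not
    (s := T.G.neighborFinset v) (p := fun w => T.sgn s(v, w) = true)
  have hdeg : T.deg v = (T.G.neighborFinset v).card := rfl
  rw [hdeg, ← h]
  congr 2
  ext w
  simp [Bool.not_eq_true]

open SimpleGraph Finset in
/-- Auxiliary: a pendant vertex has signed degree ±1, so if `-1` is avoided, its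
signed degree is `1` and all (i.e. the one) incident edges are positive. -/
lemma SignedTree.pendant_pos (T : SignedTree) (hm : ∀ t, T.sdeg t ≠ -1) (t : Fin T.n)
    (ht : T.deg t = 1) :
    T.sdeg t = 1 ∧ ∀ u, T.G.Adj t u → T.sgn s(t, u) = true := by
  letI := T.adjDec
  have hsum := T.card_filter_add t
  simp only [ht] at hsum
  have hM : (((T.G.neighborFinset t).filter fun w => T.sgn s(t, w) = false).card) = 0 := by
    by_contra hM0
    have hM1 : (((T.G.neighborFinset t).filter fun w => T.sgn s(t, w) = false).card) = 1 := by
      omega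
    have hP0 : (((T.G.neighborFinset t).filter fun w => T.sgn s(t, w) = true).card) = 0 := by
      omega
    have : T.sdeg t = -1 := by
      simp only [SignedTree.sdeg, hM1, hP0]
      norm_num
    exact hm t this
  have hP1 : (((T.G.neighborFinset t).filter fun w => T.sgn s(t, w) = true).card) = 1 := by
    omega
  constructor
  · simp only [SignedTree.sdeg, hM, hP1]; norm_num
  · intro u hu
    by_contra hne
    have hfalse : T.sgn s(t, u) = false := by
      cases hb : T.sgn s(t, u) <;> simp_all
    have : u ∈ ((T.G.neighborFinset t).filter fun w => T.sgn s(t, w) = false) := by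
      simp [Finset.mem_filter, SimpleGraph.mem_neighborFinset, hu, hfalse]
    rw [Finset.card_eq_zero.mp hM] at this
    exact absurd this (Finset.notMem_empty u)

open SimpleGraph Finset in
/-- In a signed tree whose signed degree set avoids `-1`, a vertex of
negative signed degree is neither pendant nor adjacent to a limiting pendant vertex. -/
theorem stmt_6 (T : SignedTree) (D : Set ℤ) (hreal : T.Realizes D) (hm1 : (-1 : ℤ) ∉ D)
    (v : Fin T.n) (hv : T.sdeg v < 0) :
    T.deg v ≠ 1 ∧ ∀ w : Fin T.n, T.G.Adj v w → ¬ T.IsLimitingPendant w := by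
  letI := T.adjDec
  have hm : ∀ t, T.sdeg t ≠ -1 := by
    intro t h
    exact hm1 (hreal ▸ Set.mem_range.mpr ⟨t, h⟩)
  constructor
  · intro h1
    have := (T.pendant_pos hm v h1).1
    omega
  · rintro w hadj ⟨hw1, u, p, hp, hmax⟩
    -- the edge v-w is positive
    have hwv : T.sgn s(w, v) = true := (T.pendant_pos hm w hw1).2 v hadj.symm
    have hvw : T.sgn s(v, w) = true := by rwa [Sym2.eq_swap]
    -- counts at v
    have hsum := T.card_filter_add v
    have hsdeg : T.sdeg v =
        ((((T.G.neighborFinset v).filter fun z => T.sgn s(v, z) = true).card : ℤ)) -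
        ((((T.G.neighborFinset v).filter fun z => T.sgn s(v, z) = false).card : ℤ)) := rfl
    have hwP : w ∈ ((T.G.neighborFinset v).filter fun z => T.sgn s(v, z) = true) := by
      simp [Finset.mem_filter, SimpleGraph.mem_neighborFinset, hadj, hvw]
    have hP1 : 1 ≤ (((T.G.neighborFinset v).filter fun z => T.sgn s(v, z) = true).card) :=
      Finset.card_pos.mpr ⟨w, hwP⟩
    have hM2 : 2 ≤ (((T.G.neighborFinset v).filter fun z => T.sgn s(v, z) = false).card) := by
      omega
    -- the longest path has length ≥ 1
    have hvw_path : (SimpleGraph.Walk.cons hadj SimpleGraph.Walk.nil).IsPath := by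
      simp [SimpleGraph.Walk.cons_isPath_iff, hadj.ne]
    have hlen1 : 1 ≤ p.length := by
      have := hmax v w _ hvw_path
      simpa using this
    -- decompose p from the w side
    have hnil : ¬ p.reverse.Nil := by
      rw [SimpleGraph.Walk.not_nil_iff_lt_length]
      simpa using Nat.lt_of_lt_of_le Nat.zero_lt_one hlen1
    obtain ⟨b, hb, q₀, hq⟩ := SimpleGraph.Walk.not_nil_iff.mp hnil
    -- b = v since w is pendant with neighbor v
    have hbv : v = b := by
      have hdegw : (T.G.neighborFinset w).card = 1 := hw1
      obtain ⟨a, ha⟩ := Finset.card_eq_one.mp hdegw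
      have h1 : b ∈ T.G.neighborFinset w := (SimpleGraph.mem_neighborFinset _ _ _).mpr hb
      have h2 : v ∈ T.G.neighborFinset w := (SimpleGraph.mem_neighborFinset _ _ _).mpr hadj.symm
      rw [ha, Finset.mem_singleton] at h1 h2
      rw [h1, h2]
    subst hbv
    -- q₀ : Walk v u is a path not containing w
    have hrev : p.reverse.IsPath := hp.reverse
    rw [hq, SimpleGraph.Walk.cons_isPath_iff] at hrev
    obtain ⟨hq₀, hwq⟩ := hrev
    have hqlen : q₀.length + 1 = p.length := by
      have := congrArg SimpleGraph.Walk.length hq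
      simpa using this.symm
    have huniq := T.isTree.existsUnique_path
    -- choose a negative neighbor x of v distinct from the second vertex of q₀
    set z := q₀.getVert 1 with hz
    obtain ⟨x, hxM, hxz⟩ :
        ∃ x, x ∈ ((T.G.neighborFinset v).filter fun t => T.sgn s(v, t) = false) ∧ x ≠ z :=
      Finset.exists_mem_ne (by omega) z
    rw [Finset.mem_filter, SimpleGraph.mem_neighborFinset] at hxM
    obtain ⟨hadjvx, hsgnvx⟩ := hxM
    -- x is not on q₀
    have hxs : x ∉ q₀.support := by
      intro hxs
      have hpath2 : (SimpleGraph.Walk.cons hadjvx SimpleGraph.Walk.nil).IsPath := by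
        simp [SimpleGraph.Walk.cons_isPath_iff, hadjvx.ne]
      have heq : q₀.takeUntil x hxs = SimpleGraph.Walk.cons hadjvx SimpleGraph.Walk.nil :=
        (huniq v x).unique (hq₀.takeUntil hxs) hpath2
      have hspec := q₀.take_spec hxs
      rw [heq] at hspec
      have : q₀.getVert 1 = x := by
        rw [← hspec]
        simp [SimpleGraph.Walk.cons_append, SimpleGraph.Walk.nil_append,
          SimpleGraph.Walk.getVert_cons_succ]
      exact hxz (by rw [hz, this])
    -- x is not pendant (else its signed degree would be -1)
    have hxdeg : T.deg x ≠ 1 := by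
      intro h1
      have hpos := (T.pendant_pos hm x h1).2 v hadjvx.symm
      rw [Sym2.eq_swap, hsgnvx] at hpos
      exact Bool.false_ne_true hpos
    have hx1 : 1 ≤ (T.G.neighborFinset x).card := by
      apply Finset.card_pos.mpr
      exact ⟨v, (SimpleGraph.mem_neighborFinset _ _ _).mpr hadjvx.symm⟩
    have hx2 : 1 < (T.G.neighborFinset x).card := by
      rcases Nat.lt_or_ge 1 (T.G.neighborFinset x).card with h | h
      · exact h
      · exact absurd (Nat.le_antisymm h hx1) hxdeg
    obtain ⟨y, hy, hyv⟩ := Finset.exists_mem_ne hx2 v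
    rw [SimpleGraph.mem_neighborFinset] at hy
    -- y is not on q₀
    have hys : y ∉ q₀.support := by
      intro hys
      have hpath2 : (SimpleGraph.Walk.cons hadjvx
          (SimpleGraph.Walk.cons hy SimpleGraph.Walk.nil)).IsPath := by
        simp [SimpleGraph.Walk.cons_isPath_iff, SimpleGraph.Walk.support_cons,
          hy.ne, hadjvx.ne, hyv.symm ]
      have heq : q₀.takeUntil y hys =
          SimpleGraph.Walk.cons hadjvx (SimpleGraph.Walk.cons hy SimpleGraph.Walk.nil) :=
        (huniq v y).unique (hq₀.takeUntil hys) hpath2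
      have hxsub : x ∈ (q₀.takeUntil y hys).support := by
        rw [heq]; simp
      exact hxs (q₀.support_takeUntil_subset hys hxsub)
    -- build a longer path: y - x - v - ... - u
    have hRpath : (SimpleGraph.Walk.cons hy.symm
        (SimpleGraph.Walk.cons hadjvx.symm q₀)).IsPath := by
      rw [SimpleGraph.Walk.cons_isPath_iff, SimpleGraph.Walk.cons_isPath_iff]
      refine ⟨⟨hq₀, hxs⟩, ?_⟩
      simp only [SimpleGraph.Walk.support_cons, List.mem_cons]
      rintro (h | h)
      · exact hy.ne' h
      · exact hys h
    have hcontra := hmax _ _ _ hRpath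
    simp only [SimpleGraph.Walk.length_cons] at hcontra
    omega
end

section
/- Let Y = {y_1, ..., y_m} be a nonempty finite set of m distinct integers, each less than −1, and let D = {1} ∪ Y. If (T,s) is a signed tree that realizes D, then diam(T) ≥ 4 if m = 1, diam(T) ≥ 5 if m = 2, and diam(T) ≥ 6 if m > 2. -/
open SimpleGraph Walk

section TreeAux

variable {V : Type*} {G : SimpleGraph V}

private lemma concat_isPath' {x a b : V} {p : G.Walk x a} (hp : p.IsPath) (hab : G.Adj a b)
    (hb : b ∉ p.support) : (p.concat hab).IsPath := by
  rw [← isPath_reverse_iff, reverse_concat]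
  exact hp.reverse.cons (by simpa [Walk.support_reverse] using hb)

/-- In a tree, vertices adjacent to each other have different distances to any vertex. -/
private lemma tree_step (hT : G.IsTree) {x a b : V} (hab : G.Adj a b) :
    G.dist x a ≠ G.dist x b := by
  classical
  intro h
  obtain ⟨p, hp, hpl⟩ := hT.isConnected.exists_path_of_dist x a
  have hbp : b ∉ p.support := by
    intro hb
    have hba : b ≠ a := hab.ne'
    have h1 : G.dist x b ≤ (p.takeUntil b hb).length := dist_le _
    have h2 : (p.takeUntil b hb).length + (p.dropUntil b hb).length = p.length := by
      rw [← length_append, take_spec]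
    have h3 : (p.dropUntil b hb).length ≠ 0 := fun h0 => hba (eq_of_length_eq_zero h0)
    omega
  have hq : (p.concat hab).IsPath := concat_isPath' hp hab hbp
  obtain ⟨r, hr, hrl⟩ := hT.isConnected.exists_path_of_dist x b
  have he : p.concat hab = r :=
    congrArg Subtype.val (hT.IsAcyclic.path_unique ⟨p.concat hab, hq⟩ ⟨r, hr⟩)
  have he' : (p.concat hab).length = r.length := by rw [he]
  rw [length_concat] at he'
  omega

/-- In a tree, the predecessor on the path from `x` is unique. -/
private lemma tree_pred (hT : G.IsTree) {x v u1 u2 : V} (h1 : G.Adj u1 v) (h2 : G.Adj u2 v)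
    (hd1 : G.dist x u1 + 1 = G.dist x v) (hd2 : G.dist x u2 + 1 = G.dist x v) :
    u1 = u2 := by
  classical
  obtain ⟨p1, hp1, hl1⟩ := hT.isConnected.exists_path_of_dist x u1
  obtain ⟨p2, hp2, hl2⟩ := hT.isConnected.exists_path_of_dist x u2
  have hv1 : v ∉ p1.support := by
    intro hv
    have ha : G.dist x v ≤ (p1.takeUntil v hv).length := dist_le _
    have hb := length_takeUntil_le p1 hv
    omega
  have hv2 : v ∉ p2.support := by
    intro hv
    have ha : G.dist x v ≤ (p2.takeUntil v hv).length := dist_le _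
    have hb := length_takeUntil_le p2 hv
    omega
  have hq1 : (p1.concat h1).IsPath := concat_isPath' hp1 h1 hv1
  have hq2 : (p2.concat h2).IsPath := concat_isPath' hp2 h2 hv2
  have he : p1.concat h1 = p2.concat h2 :=
    congrArg Subtype.val (hT.IsAcyclic.path_unique ⟨p1.concat h1, hq1⟩ ⟨p2.concat h2, hq2⟩)
  have e1 : (p1.concat h1).reverse.getVert 1 = u1 := by
    rw [reverse_concat]; exact (getVert_cons_succ _ _).trans (getVert_zero _)
  have e2 : (p2.concat h2).reverse.getVert 1 = u2 := by
    rw [reverse_concat]; exact (getVert_cons_succ _ _).trans (getVert_zero _)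
  rw [← e1, ← e2, he]

/-- In a tree, distances to adjacent vertices differ by exactly one. -/
private lemma tree_step' (hT : G.IsTree) {x a b : V} (hab : G.Adj a b) :
    G.dist x b = G.dist x a + 1 ∨ G.dist x a = G.dist x b + 1 := by
  have hne := tree_step hT hab (x := x)
  have t1 : G.dist x b ≤ G.dist x a + 1 := by
    obtain ⟨p, hp, hl⟩ := hT.isConnected.exists_path_of_dist x a
    have := dist_le (p.concat hab)
    rw [length_concat] at this
    omega
  have t2 : G.dist x a ≤ G.dist x b + 1 := by
    obtain ⟨p, hp, hl⟩ := hT.isConnected.exists_path_of_dist x b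
    have := dist_le (p.concat hab.symm)
    rw [length_concat] at this
    omega
  omega

/-- Extension lemma: if `v` has two distinct non-leaf neighbors, then for any `x`
there is a vertex at distance `dist x v + 2` from `x`. -/
private lemma tree_extend (hT : G.IsTree) {x v u1 u2 : V} (h1 : G.Adj v u1) (h2 : G.Adj v u2)
    (h12 : u1 ≠ u2) (hw1 : ∃ w, w ≠ v ∧ G.Adj u1 w) (hw2 : ∃ w, w ≠ v ∧ G.Adj u2 w) :
    ∃ w, G.dist x w = G.dist x v + 2 := by
  have key : ∀ u, G.Adj v u → (∃ w, w ≠ v ∧ G.Adj u w) →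
      G.dist x u = G.dist x v + 1 → ∃ w, G.dist x w = G.dist x v + 2 := by
    rintro u hu ⟨w, hwv, huw⟩ hdu
    rcases tree_step' hT huw (x := x) with h | h
    · exact ⟨w, by omega⟩
    · exact absurd (tree_pred hT (x := x) huw.symm hu (by omega) (by omega)) hwv
  rcases tree_step' hT h1 (x := x) with e1 | e1
  · exact key u1 h1 hw1 e1
  · rcases tree_step' hT h2 (x := x) with e2 | e2
    · exact key u2 h2 hw2 e2
    · exact absurd (tree_pred hT (x := x) h1.symm h2.symm (by omega) (by omega)) h12

end TreeAux

/-- If a signed tree realizes `D = {1} ∪ Y` with `Y` a nonempty set of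
`m` distinct integers each less than `-1`, then its diameter is at least 4 if `m = 1`,
at least 5 if `m = 2`, and at least 6 if `m > 2`. -/
theorem stmt_7 (m : ℕ) (Y : Finset ℤ) (hcard : Y.card = m) (hne : Y.Nonempty)
    (hy : ∀ y ∈ Y, y < -1) (D : Set ℤ) (hD : D = insert 1 (↑Y : Set ℤ))
    (T : SignedTree) (hreal : T.Realizes D) :
    (m = 1 → 4 ≤ T.G.diam) ∧ (m = 2 → 5 ≤ T.G.diam) ∧ (2 < m → 6 ≤ T.G.diam) := by
  classical
  letI := T.adjDec
  have hT := T.isTree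
  have hconn := hT.isConnected
  haveI : Nonempty (Fin T.n) := hconn.nonempty
  have hval : ∀ v, T.sdeg v = 1 ∨ T.sdeg v ≤ -2 := by
    intro v
    have hmem : T.sdeg v ∈ D := by rw [hreal]; exact Set.mem_range_self v
    rw [hD, Set.mem_insert_iff] at hmem
    rcases hmem with h | h
    · exact Or.inl h
    · have := hy _ h; omega
  have hsplit : ∀ v : Fin T.n,
      ((T.G.neighborFinset v).filter fun w => T.sgn s(v, w) = true).card
        + ((T.G.neighborFinset v).filter fun w => T.sgn s(v, w) = false).card
        = (T.G.neighborFinset v).card := by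
    intro v
    have hfe : ((T.G.neighborFinset v).filter fun w => ¬ T.sgn s(v, w) = true)
        = (T.G.neighborFinset v).filter fun w => T.sgn s(v, w) = false := by
      apply Finset.filter_congr
      intro w _
      simp
    have := Finset.card_filter_add_card_filter_not
      (s := T.G.neighborFinset v) (p := fun w => T.sgn s(v, w) = true)
    rw [hfe] at this
    exact this
  have hsdeg : ∀ v : Fin T.n, T.sdeg v =
      (((T.G.neighborFinset v).filter fun w => T.sgn s(v, w) = true).card : ℤ)
        - (((T.G.neighborFinset v).filter fun w => T.sgn s(v, w) = false).card : ℤ) :=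
    fun v => rfl
  have hleaf : ∀ v u : Fin T.n, T.G.Adj v u → (T.G.neighborFinset v).card = 1 →
      T.sgn s(v, u) = true := by
    intro v u hadj hcard1
    by_contra hf
    have hf' : T.sgn s(v, u) = false := by
      cases hsg : T.sgn s(v, u)
      · rfl
      · exact absurd hsg hf
    have humem : u ∈ (T.G.neighborFinset v).filter fun w => T.sgn s(v, w) = false := by
      rw [Finset.mem_filter, SimpleGraph.mem_neighborFinset]
      exact ⟨hadj, hf'⟩
    have h1 : 1 ≤ ((T.G.neighborFinset v).filter fun w => T.sgn s(v, w) = false).card :=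
      Finset.card_pos.mpr ⟨u, humem⟩
    have h2 := hsplit v
    have h3 := hsdeg v
    rcases hval v with h4 | h4 <;> omega
  have hneg : ∀ v : Fin T.n, T.sdeg v ≤ -2 → ∀ x, ∃ w, T.G.dist x w = T.G.dist x v + 2 := by
    intro v hv x
    have h2 := hsplit v
    have h3 := hsdeg v
    have hncard : 1 < ((T.G.neighborFinset v).filter fun w => T.sgn s(v, w) = false).card := by
      omega
    obtain ⟨u1, u2, hu1, hu2, h12⟩ := Finset.one_lt_card_iff.mp hncard
    rw [Finset.mem_filter, SimpleGraph.mem_neighborFinset] at hu1 hu2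
    have hbig : ∀ u, T.G.Adj v u → T.sgn s(v, u) = false → ∃ w, w ≠ v ∧ T.G.Adj u w := by
      intro u hadj hfalse
      have hvmem : v ∈ T.G.neighborFinset u := by
        rw [SimpleGraph.mem_neighborFinset]; exact hadj.symm
      have hcard1 : 1 ≤ (T.G.neighborFinset u).card := Finset.card_pos.mpr ⟨v, hvmem⟩
      have hcardne : (T.G.neighborFinset u).card ≠ 1 := by
        intro hone
        have htrue : T.sgn s(v, u) = true := by
          rw [Sym2.eq_swap]
          exact hleaf u v hadj.symm hone
        rw [hfalse] at htrue
        exact Bool.false_ne_true htrue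
      obtain ⟨w, hwmem, hwne⟩ := Finset.exists_mem_ne
        (s := T.G.neighborFinset u) (by omega) v
      rw [SimpleGraph.mem_neighborFinset] at hwmem
      exact ⟨w, hwne, hwmem⟩
    exact tree_extend hT hu1.1 hu2.1 h12 (hbig u1 hu1.1 hu1.2) (hbig u2 hu2.1 hu2.2)
  have hediam : T.G.ediam ≠ ⊤ := by
    obtain ⟨u, v, huv⟩ := SimpleGraph.exists_edist_eq_ediam_of_finite (G := T.G)
    rw [← huv]
    exact SimpleGraph.edist_ne_top_iff_reachable.mpr (hconn.preconnected u v)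
  have hdiam : ∀ u v : Fin T.n, T.G.dist u v ≤ T.G.diam := fun u v =>
    SimpleGraph.dist_le_diam hediam
  have hmemD : ∀ y ∈ Y, ∃ v, T.sdeg v = y ∧ T.sdeg v ≤ -2 := by
    intro y hyY
    have hyr : y ∈ Set.range T.sdeg := by
      rw [← hreal, hD]
      exact Set.mem_insert_iff.mpr (Or.inr hyY)
    obtain ⟨v, hv⟩ := hyr
    have := hy y hyY
    exact ⟨v, hv, by omega⟩
  have main : ∀ v1 v2 : Fin T.n, T.sdeg v1 ≤ -2 → T.sdeg v2 ≤ -2 →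
      T.G.dist v1 v2 + 4 ≤ T.G.diam := by
    intro v1 v2 hv1 hv2
    obtain ⟨w, hw⟩ := hneg v2 hv2 v1
    obtain ⟨w', hw'⟩ := hneg v1 hv1 w
    have hcomm : T.G.dist w v1 = T.G.dist v1 w := SimpleGraph.dist_comm
    have := hdiam w w'
    omega
  refine ⟨?_, ?_, ?_⟩
  · intro _
    obtain ⟨y, hyY⟩ := hne
    obtain ⟨v, _, hv2⟩ := hmemD y hyY
    have h0 : T.G.dist v v = 0 := SimpleGraph.dist_self
    have := main v v hv2 hv2
    omega
  · intro hm
    obtain ⟨y1, y2, hy1, hy2, hne12⟩ := Finset.one_lt_card_iff.mp (by omega : 1 < Y.card)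
    obtain ⟨v1, he1, hv1⟩ := hmemD y1 hy1
    obtain ⟨v2, he2, hv2⟩ := hmemD y2 hy2
    have hvne : v1 ≠ v2 := fun h => hne12 (by rw [← he1, ← he2, h])
    have hpos : 0 < T.G.dist v1 v2 := hconn.pos_dist_of_ne hvne
    have := main v1 v2 hv1 hv2
    omega
  · intro hm
    obtain ⟨y1, y2, hy1, hy2, hne12⟩ := Finset.one_lt_card_iff.mp (by omega : 1 < Y.card)
    have hy2e : y2 ∈ Y.erase y1 := Finset.mem_erase.mpr ⟨fun h => hne12 h.symm, hy2⟩
    have hcard3 : 0 < ((Y.erase y1).erase y2).card := by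
      have e1 := Finset.card_erase_of_mem hy1
      have e2 := Finset.card_erase_of_mem hy2e
      omega
    obtain ⟨y3, hy3m⟩ := Finset.card_pos.mp hcard3
    rw [Finset.mem_erase, Finset.mem_erase] at hy3m
    obtain ⟨hne32, hne31, hy3⟩ := hy3m
    obtain ⟨v1, he1, hv1⟩ := hmemD y1 hy1
    obtain ⟨v2, he2, hv2⟩ := hmemD y2 hy2
    obtain ⟨v3, he3, hv3⟩ := hmemD y3 hy3
    have hvne12 : v1 ≠ v2 := fun h => hne12 (by rw [← he1, ← he2, h])
    have hvne13 : v1 ≠ v3 := fun h => hne31 (by rw [← he1, ← he3, h])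
    have hvne23 : v2 ≠ v3 := fun h => hne32 (by rw [← he2, ← he3, h])
    have hpair : ∃ a b : Fin T.n, T.sdeg a ≤ -2 ∧ T.sdeg b ≤ -2 ∧ 2 ≤ T.G.dist a b := by
      by_cases h12 : 2 ≤ T.G.dist v1 v2
      · exact ⟨v1, v2, hv1, hv2, h12⟩
      by_cases h13 : 2 ≤ T.G.dist v1 v3
      · exact ⟨v1, v3, hv1, hv3, h13⟩
      by_cases h23 : 2 ≤ T.G.dist v2 v3
      · exact ⟨v2, v3, hv2, hv3, h23⟩
      exfalso
      have p12 : 0 < T.G.dist v1 v2 := hconn.pos_dist_of_ne hvne12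
      have p13 : 0 < T.G.dist v1 v3 := hconn.pos_dist_of_ne hvne13
      have p23 : 0 < T.G.dist v2 v3 := hconn.pos_dist_of_ne hvne23
      have d12 : T.G.dist v1 v2 = 1 := by omega
      have d13 : T.G.dist v1 v3 = 1 := by omega
      have d23 : T.G.dist v2 v3 = 1 := by omega
      have hadj : T.G.Adj v2 v3 := SimpleGraph.dist_eq_one_iff_adj.mp d23
      exact tree_step hT (x := v1) hadj (by rw [d12, d13])
    obtain ⟨a, b, ha, hb, hab⟩ := hpair
    have := main a b ha hb
    omega
end

section
/- Let X = {x_1, ..., x_n} be a nonempty finite set of n distinct integers, each greater than 1, and let D = {1} ∪ X. Then σ(D) = 2 − n + (x_1 + x_2 + ... + x_n). -/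
open SimpleGraph Fin

def addLeafAdj {N : ℕ} (G : SimpleGraph (Fin N)) (v : Fin N) (a b : Fin (N+1)) : Prop :=
  if ha : a = Fin.last N then b = v.castSucc
  else if hb : b = Fin.last N then a = v.castSucc
  else G.Adj (a.castPred ha) (b.castPred hb)

instance addLeafAdj.dec {N : ℕ} (G : SimpleGraph (Fin N)) (v : Fin N) [DecidableRel G.Adj] :
    DecidableRel (addLeafAdj G v) := fun a b => by unfold addLeafAdj; infer_instance

lemma addLeafAdj_symm {N : ℕ} (G : SimpleGraph (Fin N)) (v : Fin N) {a b : Fin (N+1)}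
    (h : addLeafAdj G v a b) : addLeafAdj G v b a := by
  unfold addLeafAdj at h ⊢
  by_cases ha : a = Fin.last N
  · rw [dif_pos ha] at h
    by_cases hb : b = Fin.last N
    · exact absurd (hb ▸ h).symm (Fin.castSucc_lt_last v).ne
    · rw [dif_neg hb, dif_pos ha]; exact h
  · rw [dif_neg ha] at h
    by_cases hb : b = Fin.last N
    · rw [dif_pos hb] at h; rw [dif_pos hb]; exact h
    · rw [dif_neg hb] at h; rw [dif_neg hb, dif_neg ha]; exact h.symm

def addLeafGraph {N : ℕ} (G : SimpleGraph (Fin N)) (v : Fin N) : SimpleGraph (Fin (N+1)) where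
  Adj := addLeafAdj G v
  symm := ⟨fun _ _ h => addLeafAdj_symm G v h⟩
  loopless := by
    refine ⟨?_⟩
    intro a h
    unfold addLeafAdj at h
    split_ifs at h with h1
    · exact (Fin.castSucc_lt_last v).ne (h1 ▸ h).symm
    · exact G.loopless.irrefl _ h

instance addLeafGraph.dec {N : ℕ} (G : SimpleGraph (Fin N)) (v : Fin N) [DecidableRel G.Adj] :
    DecidableRel (addLeafGraph G v).Adj := addLeafAdj.dec G v

variable {N : ℕ} {G : SimpleGraph (Fin N)} {v : Fin N}

lemma addLeaf_adj_iff {a b : Fin (N+1)} :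
    (addLeafGraph G v).Adj a b ↔ addLeafAdj G v a b := Iff.rfl

lemma addLeaf_adj_last_left {b : Fin (N+1)} :
    (addLeafGraph G v).Adj (Fin.last N) b ↔ b = v.castSucc := by
  rw [addLeaf_adj_iff]; unfold addLeafAdj; rw [dif_pos rfl]

lemma addLeaf_adj_castSucc {a b : Fin N} :
    (addLeafGraph G v).Adj a.castSucc b.castSucc ↔ G.Adj a b := by
  rw [addLeaf_adj_iff]; unfold addLeafAdj
  rw [dif_neg (Fin.castSucc_lt_last a).ne, dif_neg (Fin.castSucc_lt_last b).ne]
  simp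

lemma addLeaf_adj_castSucc_last {a : Fin N} :
    (addLeafGraph G v).Adj a.castSucc (Fin.last N) ↔ a = v := by
  rw [addLeaf_adj_iff]; unfold addLeafAdj
  rw [dif_neg (Fin.castSucc_lt_last a).ne, dif_pos rfl]
  exact ⟨fun h => Fin.castSucc_injective _ h, fun h => h ▸ rfl⟩

/-- The homomorphism from `G` into `addLeafGraph G v`. -/
def addLeafHom (G : SimpleGraph (Fin N)) (v : Fin N) : G →g addLeafGraph G v where
  toFun := Fin.castSucc
  map_rel' := addLeaf_adj_castSucc.mpr

lemma addLeaf_connected (hG : G.Connected) : (addLeafGraph G v).Connected := by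
  have key : ∀ c : Fin (N+1), (addLeafGraph G v).Reachable c v.castSucc := by
    intro c
    induction c using Fin.lastCases with
    | last => exact (addLeaf_adj_last_left.mpr rfl).reachable
    | cast c => exact (hG.preconnected c v).map (addLeafHom G v)
  haveI : Nonempty (Fin (N+1)) := ⟨Fin.last N⟩
  exact ⟨fun a b => (key a).trans (key b).symm⟩

lemma addLeaf_walk_pull :
    ∀ {x y : Fin (N+1)} (w : (addLeafGraph G v).Walk x y), Fin.last N ∉ w.support →
    ∀ (x' y' : Fin N) (hx : x = x'.castSucc) (hy : y = y'.castSucc),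
      ∃ w' : G.Walk x' y', w'.map (addLeafHom G v) = w.copy hx hy := by
  intro x y w
  induction w with
  | nil =>
    intro _ x' y' hx hy
    subst hx
    obtain rfl : x' = y' := Fin.castSucc_injective _ hy
    exact ⟨SimpleGraph.Walk.nil, by simp; rfl⟩
  | @cons u z y h p ih =>
    intro hs x' y' hx hy
    subst hx
    have hz : z ≠ Fin.last N := by
      intro hzz
      subst hzz
      apply hs
      rw [SimpleGraph.Walk.support_cons]
      exact List.mem_cons_of_mem _ p.start_mem_support
    obtain ⟨z', rfl⟩ := Fin.exists_castSucc_eq.mpr hz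
    have hadj : G.Adj x' z' := addLeaf_adj_castSucc.mp h
    obtain ⟨p', hp'⟩ := ih (fun hc => hs (by rw [SimpleGraph.Walk.support_cons]; exact List.mem_cons_of_mem _ hc)) z' y' rfl hy
    refine ⟨SimpleGraph.Walk.cons hadj p', ?_⟩
    rw [SimpleGraph.Walk.map_cons, hp']
    subst hy; rfl

lemma addLeaf_no_cycle_at_last (c : (addLeafGraph G v).Walk (Fin.last N) (Fin.last N)) :
    ¬ c.IsCycle := by
  intro hc
  cases c with
  | nil => exact SimpleGraph.Walk.IsCycle.not_of_nil hc
  | @cons _ z _ h p =>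
    have h3 : 3 ≤ p.length + 1 := by
      have := hc.three_le_length
      simpa using this
    obtain rfl : z = v.castSucc := addLeaf_adj_last_left.mp h
    rw [SimpleGraph.Walk.cons_isCycle_iff] at hc
    have hnn : ¬ p.reverse.Nil := by
      rw [SimpleGraph.Walk.nil_iff_length_eq, SimpleGraph.Walk.length_reverse]
      omega
    obtain ⟨u, h', q, hq⟩ := SimpleGraph.Walk.not_nil_iff.mp hnn
    obtain rfl : u = v.castSucc := addLeaf_adj_last_left.mp h'
    have hmem : s(Fin.last N, v.castSucc) ∈ p.reverse.edges := by
      rw [hq, SimpleGraph.Walk.edges_cons]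
      exact List.mem_cons_self
    rw [SimpleGraph.Walk.edges_reverse, List.mem_reverse] at hmem
    exact hc.2 hmem

lemma addLeaf_isTree (hG : G.IsTree) : (addLeafGraph G v).IsTree := by
  classical
  refine ⟨addLeaf_connected hG.isConnected, ?_⟩
  intro x c hc
  by_cases hl : Fin.last N ∈ c.support
  · exact addLeaf_no_cycle_at_last (c.rotate _ hl) (hc.rotate hl)
  · have hx : x ≠ Fin.last N := fun h => hl (h ▸ c.start_mem_support)
    obtain ⟨x', rfl⟩ := Fin.exists_castSucc_eq.mpr hx
    obtain ⟨w', hw'⟩ := addLeaf_walk_pull c hl x' x' rfl rfl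
    rw [SimpleGraph.Walk.copy_rfl_rfl] at hw'
    have : w'.IsCycle := by
      rw [← SimpleGraph.Walk.map_isCycle_iff_of_injective (f := addLeafHom G v)
        (Fin.castSucc_injective N), hw']
      exact hc
    exact hG.IsAcyclic _ this

section degrees
variable [DecidableRel G.Adj]

lemma addLeaf_neighborFinset_last :
    (addLeafGraph G v).neighborFinset (Fin.last N) = {v.castSucc} := by
  ext b
  simp [mem_neighborFinset, addLeaf_adj_last_left]

lemma addLeaf_degree_last : (addLeafGraph G v).degree (Fin.last N) = 1 := by
  rw [degree, addLeaf_neighborFinset_last, Finset.card_singleton]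

lemma addLeaf_neighborFinset_castSucc (a : Fin N) :
    (addLeafGraph G v).neighborFinset a.castSucc =
      (G.neighborFinset a).map ⟨Fin.castSucc, Fin.castSucc_injective N⟩
        ∪ (if a = v then {Fin.last N} else ∅) := by
  ext b
  induction b using Fin.lastCases with
  | last =>
    simp only [mem_neighborFinset, addLeaf_adj_castSucc_last, Finset.mem_union,
      Finset.mem_map, Function.Embedding.coeFn_mk]
    constructor
    · intro h; right; rw [if_pos h]; exact Finset.mem_singleton_self _
    · rintro (⟨w, _, hw⟩ | h)
      · exact absurd hw (Fin.castSucc_lt_last w).ne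
      · by_cases hav : a = v
        · exact hav
        · rw [if_neg hav] at h; simp at h
  | cast b =>
    simp only [mem_neighborFinset, addLeaf_adj_castSucc, Finset.mem_union, Finset.mem_map,
      Function.Embedding.coeFn_mk]
    constructor
    · intro h; left; exact ⟨b, by simpa [mem_neighborFinset] using h, rfl⟩
    · rintro (⟨w, hw, hww⟩ | h)
      · obtain rfl : w = b := Fin.castSucc_injective _ hww
        simpa [mem_neighborFinset] using hw
      · exfalso
        by_cases hav : a = v
        · rw [if_pos hav] at h
          exact (Fin.castSucc_lt_last b).ne (Finset.mem_singleton.mp h)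
        · rw [if_neg hav] at h; simp at h

lemma addLeaf_degree_castSucc (a : Fin N) :
    (addLeafGraph G v).degree a.castSucc = G.degree a + (if a = v then 1 else 0) := by
  rw [degree, addLeaf_neighborFinset_castSucc, Finset.card_union_of_disjoint, Finset.card_map]
  · congr 1
    split_ifs <;> simp
  · intro s hs hs' z hz
    have h1 := hs hz
    have h2 := hs' hz
    simp only [Finset.mem_map, Function.Embedding.coeFn_mk] at h1
    obtain ⟨w, _, rfl⟩ := h1
    split_ifs at h2
    · exact absurd (Finset.mem_singleton.mp h2) (Fin.castSucc_lt_last w).ne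
    · simp at h2

end degrees
-- SignedTree layer
namespace SignedTree

/-- The one-vertex signed tree. -/
def one : SignedTree where
  n := 1
  G := ⊥
  adjDec := fun _ _ => inferInstanceAs (Decidable False)
  isTree := by
    refine ⟨⟨fun a b => ?_⟩, SimpleGraph.isAcyclic_bot⟩
    rw [Subsingleton.elim a b]
  sgn := fun _ => true

lemma one_deg (w : Fin one.n) : one.deg w = 0 := by
  letI := one.adjDec
  have h : one.deg w < Fintype.card (Fin one.n) := SimpleGraph.degree_lt_card_verts (G := one.G) w
  rw [Fintype.card_fin] at h
  exact Nat.lt_one_iff.mp h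

/-- Add a pendant leaf attached at `v`, all-positive signs. -/
def addLeaf (T : SignedTree) (v : Fin T.n) : SignedTree where
  n := T.n + 1
  G := letI := T.adjDec; addLeafGraph T.G v
  adjDec := letI := T.adjDec; addLeafGraph.dec T.G v
  isTree := addLeaf_isTree T.isTree
  sgn := fun _ => true

lemma addLeaf_n (T : SignedTree) (v : Fin T.n) : (T.addLeaf v).n = T.n + 1 := rfl

lemma addLeaf_deg_last (T : SignedTree) (v : Fin T.n) :
    (T.addLeaf v).deg (Fin.last T.n) = 1 := by
  letI := T.adjDec
  have : (T.addLeaf v).deg (Fin.last T.n) = (addLeafGraph T.G v).degree (Fin.last T.n) := by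
    rfl
  rw [this, addLeaf_degree_last]

lemma addLeaf_deg_castSucc (T : SignedTree) (v : Fin T.n) (a : Fin T.n) :
    (T.addLeaf v).deg a.castSucc = T.deg a + (if a = v then 1 else 0) := by
  letI := T.adjDec
  have : (T.addLeaf v).deg a.castSucc = (addLeafGraph T.G v).degree a.castSucc := by
    rfl
  rw [this, addLeaf_degree_castSucc]
  rfl

lemma sdeg_eq_deg (T : SignedTree) (hs : T.sgn = fun _ => true) (w : Fin T.n) :
    T.sdeg w = (T.deg w : ℤ) := by
  letI := T.adjDec
  unfold SignedTree.sdeg SignedTree.deg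
  rw [hs]
  rw [Finset.filter_true_of_mem (fun _ _ => rfl),
    Finset.filter_false_of_mem (fun _ _ => by simp)]
  simp only [Finset.card_empty, Nat.cast_zero, sub_zero]
  rfl

end SignedTree
namespace SignedTree

lemma exists_tree : ∀ (s m : ℕ) (d : Fin (m+1) → ℕ), (∑ i, d i) = s → (∀ i, 2 ≤ d i) →
    ∃ (T : SignedTree) (f : Fin (m+1) → Fin T.n),
      T.sgn = (fun _ => true) ∧
      T.n + (m + 1) = (∑ i, d i) + 2 ∧
      Function.Injective f ∧ (∀ i, T.deg (f i) = d i) ∧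
      ∀ w, w ∉ Set.range f → T.deg w = 1 := by
  intro s
  induction s using Nat.strong_induction_on with
  | _ s ih =>
  intro m d hs hd
  by_cases hbig : ∃ i, 3 ≤ d i
  · -- decrement a big degree and add a leaf
    obtain ⟨i, hi⟩ := hbig
    set d' : Fin (m+1) → ℕ := Function.update d i (d i - 1) with hd'def
    have hd2' : ∀ j, 2 ≤ d' j := by
      intro j
      by_cases hj : j = i
      · subst hj; rw [hd'def, Function.update_self]; omega
      · rw [hd'def, Function.update_of_ne hj]; exact hd j
    have hsplit : ∑ j, d j = d i + ∑ j ∈ Finset.univ \ {i}, d j :=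
      (Finset.sum_eq_add_sum_sdiff_singleton_of_mem (Finset.mem_univ i) d)
    have hsum' : (∑ j, d' j) + 1 = s := by
      rw [hd'def, Finset.sum_update_of_mem (Finset.mem_univ i), ← hs, hsplit]
      omega
    have hlt : (∑ j, d' j) < s := by omega
    obtain ⟨T, f, hsgn, hn, hinj, hdeg, hleaf⟩ := ih _ hlt m d' rfl hd2'
    refine ⟨T.addLeaf (f i), fun j => (f j).castSucc, rfl, ?_, ?_, ?_, ?_⟩
    · have h1 : (T.addLeaf (f i)).n = T.n + 1 := rfl
      have h2 : (∑ j, d j) = (∑ j, d' j) + 1 := by omega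
      omega
    · exact fun a b hab => hinj (Fin.castSucc_injective _ hab)
    · intro j
      rw [addLeaf_deg_castSucc, hdeg j]
      by_cases hj : j = i
      · subst hj
        rw [if_pos rfl, hd'def, Function.update_self]
        omega
      · rw [if_neg (fun hc => hj (hinj hc)), hd'def, Function.update_of_ne hj]
        omega
    · intro w hw
      induction w using Fin.lastCases with
      | last => exact addLeaf_deg_last T (f i)
      | cast w' =>
        have hw' : w' ∉ Set.range f := by
          rintro ⟨j, rfl⟩
          exact hw ⟨j, rfl⟩
        rw [addLeaf_deg_castSucc, hleaf w' hw', if_neg (fun hc => hw' ⟨i, hc.symm⟩)]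
  · -- all degrees are 2
    have hall : ∀ i, d i = 2 := by
      push_neg at hbig
      intro i; have := hbig i; have := hd i; omega
    cases m with
    | zero =>
      -- path on 3 vertices
      refine ⟨(one.addLeaf (Fin.last 0)).addLeaf (Fin.last one.n),
        fun _ => (Fin.last one.n).castSucc, rfl, ?_, ?_, ?_, ?_⟩
      · have h4 : (∑ i : Fin 1, d i) = 2 := by rw [Fin.sum_univ_one, hall]
        rw [h4]
        rfl
      · exact fun a b _ => Fin.ext (by omega)
      · intro i
        erw [addLeaf_deg_castSucc, addLeaf_deg_last, if_pos rfl, hall]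
      · intro w hw
        induction w using Fin.lastCases with
        | last => exact addLeaf_deg_last _ _
        | cast w' =>
          induction w' using Fin.lastCases with
          | last => exact absurd ⟨0, rfl⟩ hw
          | cast w'' =>
            erw [addLeaf_deg_castSucc, if_neg (Fin.castSucc_lt_last w'').ne,
              addLeaf_deg_castSucc, one_deg, if_pos (Fin.ext (show w''.val = (Fin.last 0).val by
                have h2 : w''.val < one.n := w''.isLt
                have h3 : one.n = 1 := rfl
                have h4 : (Fin.last 0).val = 0 := rfl
                omega))]
    | succ m' =>
      -- extend the spine at a leaf
      have hsd : (∑ _i : Fin (m'+1), (2:ℕ)) = 2 * (m'+1) := by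
        rw [Finset.sum_const, Finset.card_univ, Fintype.card_fin, smul_eq_mul, Nat.mul_comm]
      have hs2 : s = 2 * (m'+2) := by
        rw [← hs, Finset.sum_congr rfl (fun i _ => hall i), Finset.sum_const,
          Finset.card_univ, Fintype.card_fin, smul_eq_mul, Nat.mul_comm]
      have hlt : (∑ _i : Fin (m'+1), (2:ℕ)) < s := by omega
      obtain ⟨T, f, hsgn, hn, hinj, hdeg, hleaf⟩ :=
        ih _ hlt m' (fun _ => 2) rfl (fun _ => le_refl 2)
      rw [hsd] at hn
      have hTn : T.n = m' + 3 := by omega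
      have hex : ∃ w₀ : Fin T.n, w₀ ∉ Set.range f := by
        by_contra hc
        push_neg at hc
        have hsurj : Function.Surjective f := fun w => hc w
        have := Fintype.card_le_of_surjective f hsurj
        simp only [Fintype.card_fin] at this
        omega
      obtain ⟨w₀, hw₀⟩ := hex
      refine ⟨T.addLeaf w₀,
        Fin.lastCases (motive := fun _ => Fin (T.n+1)) w₀.castSucc (fun j => (f j).castSucc), rfl, ?_, ?_, ?_, ?_⟩
      · have h1 : (T.addLeaf w₀).n = T.n + 1 := rfl
        have h3 : (∑ i : Fin (m'+1+1), d i) = 2 * (m'+2) := by omega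
        omega
      · intro a b hab
        induction a using Fin.lastCases with
        | last =>
          induction b using Fin.lastCases with
          | last => rfl
          | cast j =>
            simp only [Fin.lastCases_last, Fin.lastCases_castSucc] at hab
            exact absurd ⟨j, (Fin.castSucc_injective _ hab).symm⟩ hw₀
        | cast j =>
          induction b using Fin.lastCases with
          | last =>
            simp only [Fin.lastCases_last, Fin.lastCases_castSucc] at hab
            exact absurd ⟨j, Fin.castSucc_injective _ hab⟩ hw₀
          | cast j' =>
            simp only [Fin.lastCases_castSucc] at hab
            rw [hinj (Fin.castSucc_injective _ hab)]
      · intro i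
        induction i using Fin.lastCases with
        | last =>
          simp only [Fin.lastCases_last]
          rw [addLeaf_deg_castSucc, hleaf w₀ hw₀, if_pos rfl, hall]
        | cast j =>
          simp only [Fin.lastCases_castSucc]
          rw [addLeaf_deg_castSucc, hdeg j, if_neg (fun hc => hw₀ ⟨j, hc⟩), hall]
      · intro w hw
        induction w using Fin.lastCases with
        | last => exact addLeaf_deg_last _ _
        | cast w' =>
          have hw'w : w' ≠ w₀ := by
            rintro rfl
            exact hw ⟨Fin.last _, by simp only [Fin.lastCases_last]; rfl⟩
          have hw' : w' ∉ Set.range f := by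
            rintro ⟨j, rfl⟩
            exact hw ⟨j.castSucc, by simp only [Fin.lastCases_castSucc]; rfl⟩
          rw [addLeaf_deg_castSucc, hleaf w' hw', if_neg hw'w]

end SignedTree
lemma SignedTree.sdeg_le_deg (T : SignedTree) (w : Fin T.n) : T.sdeg w ≤ (T.deg w : ℤ) := by
  letI := T.adjDec
  have h1 : T.sdeg w = (((T.G.neighborFinset w).filter fun u => T.sgn s(w, u) = true).card : ℤ) -
      (((T.G.neighborFinset w).filter fun u => T.sgn s(w, u) = false).card : ℤ) := rfl
  have h2 : T.deg w = (T.G.neighborFinset w).card := rfl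
  have h3 := Finset.card_filter_le (T.G.neighborFinset w) (fun u => T.sgn s(w, u) = true)
  omega

lemma SignedTree.sum_deg (T : SignedTree) : ∑ w, (T.deg w : ℤ) = 2 * ((T.n : ℤ) - 1) := by
  letI := T.adjDec
  have h1 : ∑ w, T.deg w = 2 * T.G.edgeFinset.card := by
    have := SimpleGraph.sum_degrees_eq_twice_card_edges T.G
    exact this
  have h2 : T.G.edgeFinset.card + 1 = T.n := by
    have := T.isTree.card_edgeFinset
    rwa [Fintype.card_fin] at this
  have h3 : ((∑ w, T.deg w : ℕ) : ℤ) = ∑ w, (T.deg w : ℤ) := Nat.cast_sum _ _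
  omega

lemma lower_bound (n : ℕ) (X : Finset ℤ) (hcard : X.card = n) (hx : ∀ x ∈ X, 1 < x)
    (T : SignedTree) (hreal : T.Realizes (insert 1 (↑X : Set ℤ))) :
    (∑ x ∈ X, x) + 2 ≤ (T.n : ℤ) + n := by
  classical
  have h1X : (1:ℤ) ∉ X := fun h => by have := hx 1 h; omega
  set D' : Finset ℤ := insert 1 X with hD'
  have hcD' : D'.card = n + 1 := by rw [hD', Finset.card_insert_of_notMem h1X, hcard]
  have hrange : ∀ w, T.sdeg w = 1 ∨ T.sdeg w ∈ X := by
    intro w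
    have : T.sdeg w ∈ (insert 1 (↑X : Set ℤ)) := by
      rw [hreal]; exact ⟨w, rfl⟩
    simpa [Set.mem_insert_iff] using this
  have hsd1 : ∀ w, 1 ≤ T.sdeg w := by
    intro w
    rcases hrange w with h | h
    · omega
    · have := hx _ h; omega
  have hmem : ∀ z ∈ D', ∃ w, T.sdeg w = z := by
    intro z hz
    have : z ∈ Set.range T.sdeg := by
      rw [← hreal]
      simpa [hD', Set.mem_insert_iff] using hz
    exact this
  choose φ hφ using hmem
  set A : Finset (Fin T.n) := D'.attach.image (fun z => φ z.1 z.2) with hA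
  have hinjA : Set.InjOn (fun z : {x // x ∈ D'} => φ z.1 z.2) D'.attach := by
    intro a _ b _ hab
    simp only at hab
    apply Subtype.ext
    rw [← hφ a.1 a.2, ← hφ b.1 b.2, hab]
  have hcA : A.card = n + 1 := by
    rw [hA, Finset.card_image_of_injOn hinjA, Finset.card_attach, hcD']
  have hsumA : ∑ w ∈ A, T.sdeg w = ∑ z ∈ D', z := by
    rw [hA, Finset.sum_image (fun a ha b hb hab =>
      hinjA (Finset.mem_coe.mpr ha) (Finset.mem_coe.mpr hb) hab)]
    rw [Finset.sum_congr rfl (fun z _ => hφ z.1 z.2)]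
    exact Finset.sum_attach D' (fun z => z)
  have hAsub : A ⊆ Finset.univ := Finset.subset_univ A
  have hsplit : ∑ w ∈ Finset.univ \ A, T.sdeg w + ∑ w ∈ A, T.sdeg w = ∑ w, T.sdeg w :=
    Finset.sum_sdiff hAsub
  have hcardA : (Finset.univ \ A).card = T.n - (n+1) := by
    rw [Finset.card_sdiff_of_subset hAsub, Finset.card_univ, Fintype.card_fin, hcA]
  have hle : n + 1 ≤ T.n := by
    have := Finset.card_le_univ A
    rwa [hcA, Fintype.card_fin] at this
  have hrest : ((Finset.univ \ A).card : ℤ) ≤ ∑ w ∈ Finset.univ \ A, T.sdeg w := by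
    have := Finset.card_nsmul_le_sum (Finset.univ \ A) T.sdeg 1 (fun w _ => hsd1 w)
    simpa using this
  have hsumD' : ∑ z ∈ D', z = 1 + ∑ x ∈ X, x := by
    rw [hD', Finset.sum_insert h1X]
  have hub : ∑ w, T.sdeg w ≤ 2 * ((T.n : ℤ) - 1) := by
    calc ∑ w, T.sdeg w ≤ ∑ w, (T.deg w : ℤ) :=
          Finset.sum_le_sum (fun w _ => T.sdeg_le_deg w)
      _ = 2 * ((T.n : ℤ) - 1) := T.sum_deg
  have hc2 : ((Finset.univ \ A).card : ℤ) = (T.n : ℤ) - (n+1) := by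
    rw [hcardA]
    omega
  linarith [hsplit, hrest, hub, hsumA, hsumD', hc2.symm ▸ hrest]

/-- For `D = {1} ∪ X` with `X` a nonempty set of `n` distinct integers
each greater than 1: `σ(D) = 2 - n + ∑ x ∈ X, x`. -/
theorem stmt_11 (n : ℕ) (X : Finset ℤ) (hcard : X.card = n) (hne : X.Nonempty)
    (hx : ∀ x ∈ X, 1 < x) (D : Set ℤ) (hD : D = insert 1 (↑X : Set ℤ)) :
    (orderOfSet D : ℤ) = 2 - (n : ℤ) + ∑ x ∈ X, x := by
  classical
  subst hD
  obtain ⟨m, rfl⟩ : ∃ m, n = m + 1 := by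
    have h0 : 0 < n := hcard ▸ Finset.card_pos.mpr hne
    exact ⟨n - 1, by omega⟩
  set g := X.orderIsoOfFin hcard with hg
  set d : Fin (m+1) → ℕ := fun i => ((g i : ℤ)).toNat with hdd
  have hg2 : ∀ i, (1:ℤ) < (g i : ℤ) := fun i => hx _ (g i).2
  have hdc : ∀ i, ((d i : ℕ) : ℤ) = (g i : ℤ) := fun i =>
    Int.toNat_of_nonneg (by linarith [hg2 i])
  have hd2 : ∀ i, 2 ≤ d i := by
    intro i
    have h1 := hg2 i
    have h2 := hdc i
    omega
  have hsum : (∑ i, (d i : ℤ)) = ∑ x ∈ X, x := by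
    calc (∑ i, (d i : ℤ)) = ∑ i, ((g i : ℤ)) := Finset.sum_congr rfl (fun i _ => hdc i)
      _ = ∑ x : ↥X, (x : ℤ) := Equiv.sum_comp g.toEquiv (fun x : ↥X => (x : ℤ))
      _ = ∑ x ∈ X, x := Finset.sum_coe_sort X (fun x => x)
  obtain ⟨T, f, hsgn, hn, hinj, hdeg, hleaf⟩ := SignedTree.exists_tree _ m d rfl hd2
  have hcastsum : ((∑ i, d i : ℕ) : ℤ) = ∑ x ∈ X, x := by
    rw [Nat.cast_sum]; exact hsum
  have hnum : (T.n : ℤ) = 2 - ((m:ℤ)+1) + ∑ x ∈ X, x := by omega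
  -- there is a leaf
  have hsum_ge : 2 * (m+1) ≤ ∑ i, d i := by
    calc 2 * (m+1) = ∑ _i : Fin (m+1), 2 := by
          rw [Finset.sum_const, Finset.card_univ, Fintype.card_fin, smul_eq_mul, Nat.mul_comm]
      _ ≤ ∑ i, d i := Finset.sum_le_sum (fun i _ => hd2 i)
  have hex : ∃ w : Fin T.n, w ∉ Set.range f := by
    by_contra hc
    push_neg at hc
    have := Fintype.card_le_of_surjective f (fun w => hc w)
    simp only [Fintype.card_fin] at this
    omega
  have hreal : T.Realizes (insert 1 (↑X : Set ℤ)) := by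
    show insert 1 (↑X : Set ℤ) = Set.range T.sdeg
    ext z
    simp only [Set.mem_insert_iff, Set.mem_range, Finset.mem_coe]
    constructor
    · rintro (rfl | hz)
      · obtain ⟨w, hw⟩ := hex
        exact ⟨w, by rw [T.sdeg_eq_deg hsgn, hleaf w hw]; norm_num⟩
      · refine ⟨f (g.symm ⟨z, hz⟩), ?_⟩
        rw [T.sdeg_eq_deg hsgn, hdeg, hdc, OrderIso.apply_symm_apply]
    · rintro ⟨w, rfl⟩
      rw [T.sdeg_eq_deg hsgn]
      by_cases hw : w ∈ Set.range f
      · obtain ⟨i, rfl⟩ := hw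
        right
        rw [hdeg, hdc]
        exact (g i).2
      · left
        rw [hleaf w hw]
        norm_num
  have hmemS : T.n ∈ {k : ℕ | ∃ T' : SignedTree, T'.Realizes (insert 1 (↑X : Set ℤ)) ∧ T'.n = k} :=
    ⟨T, hreal, rfl⟩
  have hlow : ∀ k ∈ {k : ℕ | ∃ T' : SignedTree, T'.Realizes (insert 1 (↑X : Set ℤ)) ∧ T'.n = k},
      T.n ≤ k := by
    rintro k ⟨T', hT', rfl⟩
    have hlb := lower_bound (m+1) X hcard hx T' hT'
    have : (T.n : ℤ) ≤ (T'.n : ℤ) := by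
      push_cast at hlb hnum ⊢
      linarith
    exact_mod_cast this
  have horder : orderOfSet (insert 1 (↑X : Set ℤ)) = T.n := by
    unfold orderOfSet
    exact le_antisymm (Nat.sInf_le hmemS) (hlow _ (Nat.sInf_mem ⟨T.n, hmemS⟩))
  rw [horder, hnum]
  push_cast
  ring
end

section
/- Let X = {x_1, ..., x_n} be a finite set of distinct integers each greater than 1, let D = {1, 0} ∪ X, and let (T,s) be a signed tree realizing D whose underlying tree has the minimum possible number of vertices among all signed trees realizing D. If ab is an edge of T with s(ab) = −, then sdeg(a) = 0 and sdeg(b) = 0. -/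
open SimpleGraph


section AddLeaf
variable (T : SignedTree) (ℓ : Fin T.n) (c : Bool)

private def up (u : Fin T.n) : Fin (T.n + 1) := u.castSucc

private def oldAdj (i j : ℕ) : Prop :=
  if hi : i < T.n then (if hj : j < T.n then T.G.Adj ⟨i, hi⟩ ⟨j, hj⟩ else False) else False

private instance (i j : ℕ) : Decidable (oldAdj T i j) := by
  letI := T.adjDec
  unfold oldAdj
  infer_instance

private lemma oldAdj_iff {i j : ℕ} (hi : i < T.n) (hj : j < T.n) :
    oldAdj T i j ↔ T.G.Adj ⟨i, hi⟩ ⟨j, hj⟩ := by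
  simp [oldAdj, hi, hj]

private def G' : SimpleGraph (Fin (T.n + 1)) where
  Adj u v := oldAdj T u.val v.val ∨ (u.val = ℓ.val ∧ v.val = T.n) ∨ (u.val = T.n ∧ v.val = ℓ.val)
  symm := by
    refine ⟨?_⟩
    intro u v h
    rcases h with h | ⟨h1, h2⟩ | ⟨h1, h2⟩
    · left
      unfold oldAdj at h ⊢
      split_ifs at h with h1 h2
      rw [dif_pos h2, dif_pos h1]; exact h.symm
    · right; right; exact ⟨h2, h1⟩
    · right; left; exact ⟨h2, h1⟩
  loopless := by
    refine ⟨?_⟩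
    intro u h
    rcases h with h | ⟨h1, h2⟩ | ⟨h1, h2⟩
    · unfold oldAdj at h
      split_ifs at h with h1 h2
      exact T.G.loopless.irrefl _ h
    · exact absurd (h1.symm.trans h2) (Nat.ne_of_lt (h1 ▸ ℓ.isLt))
    · exact absurd (h2.symm.trans h1) (Nat.ne_of_lt (h2 ▸ ℓ.isLt))

private instance : DecidableRel (G' T ℓ).Adj := by
  intro u v
  unfold G'
  infer_instance

private lemma adj_w_iff (z : Fin (T.n + 1)) :
    (G' T ℓ).Adj (Fin.last T.n) z ↔ z = up T ℓ := by
  constructor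
  · intro h
    rcases h with h | ⟨h1, h2⟩ | ⟨h1, h2⟩
    · unfold oldAdj at h
      rw [dif_neg (by simp)] at h
      exact h.elim
    · exact absurd h1.symm (Nat.ne_of_lt ℓ.isLt)
    · exact Fin.ext (by simpa [up] using h2)
  · rintro rfl
    right; right
    exact ⟨rfl, by simp [up]⟩

private lemma adj_up_iff (u : Fin T.n) (z : Fin (T.n + 1)) :
    (G' T ℓ).Adj (up T u) z ↔
      (∃ hz : z.val < T.n, T.G.Adj u ⟨z.val, hz⟩) ∨ (u = ℓ ∧ z = Fin.last T.n) := by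
  have hu : (up T u).val = u.val := rfl
  constructor
  · intro h
    rcases h with h | ⟨h1, h2⟩ | ⟨h1, h2⟩
    · unfold oldAdj at h
      rw [hu, dif_pos u.isLt] at h
      split_ifs at h with hz
      exact Or.inl ⟨hz, h⟩
    · exact Or.inr ⟨Fin.ext (hu ▸ h1), Fin.ext h2⟩
    · exact absurd (hu ▸ h1) (Nat.ne_of_lt u.isLt)
  · intro h
    rcases h with ⟨hz, h⟩ | ⟨rfl, rfl⟩
    · left
      unfold oldAdj
      rw [hu, dif_pos u.isLt, dif_pos hz]
      exact h
    · right; left; exact ⟨rfl, rfl⟩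

private def sgn' : Sym2 (Fin (T.n + 1)) → Bool :=
  Sym2.lift ⟨fun u v =>
    if hu : u.val < T.n then
      (if hv : v.val < T.n then T.sgn s(⟨u.val, hu⟩, ⟨v.val, hv⟩) else c) else c, by
    intro u v
    dsimp only
    split_ifs with h1 h2 h3 <;> try rfl
    rw [Sym2.eq_swap]⟩

private lemma sgn'_old {u v : Fin (T.n + 1)} (hu : u.val < T.n) (hv : v.val < T.n) :
    sgn' T c s(u, v) = T.sgn s(⟨u.val, hu⟩, ⟨v.val, hv⟩) := by
  simp [sgn', hu, hv]

private lemma sgn'_new_right {u v : Fin (T.n + 1)} (hv : v.val = T.n) :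
    sgn' T c s(u, v) = c := by
  simp only [sgn', Sym2.lift_mk]
  split_ifs with h1 h2
  · exact absurd h2 (by omega)
  · rfl
  · rfl

private lemma sgn'_new_left {u v : Fin (T.n + 1)} (hu : u.val = T.n) :
    sgn' T c s(u, v) = c := by
  rw [Sym2.eq_swap]; exact sgn'_new_right T c hu

end AddLeaf

section AddLeaf2
variable (T : SignedTree) (ℓ : Fin T.n) (c : Bool)

private lemma isCycle_map_of_injOn {V W : Type*} {G : SimpleGraph V} {G2 : SimpleGraph W}
    (f : G →g G2) {u : V} {p : G.Walk u u} (hp : p.IsCycle)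
    (hinj : Set.InjOn f {v | v ∈ p.support}) : (p.map f).IsCycle := by
  have hsupp : ∀ x ∈ p.edges, ∀ y ∈ p.edges, Sym2.map f x = Sym2.map f y → x = y := by
    intro x hx y hy hxy
    induction x using Sym2.inductionOn with
    | hf a b =>
      induction y using Sym2.inductionOn with
      | hf a' b' =>
        have ha := p.fst_mem_support_of_mem_edges hx
        have hb := p.snd_mem_support_of_mem_edges hx
        have ha' := p.fst_mem_support_of_mem_edges hy
        have hb' := p.snd_mem_support_of_mem_edges hy
        simp only [Sym2.map_pair_eq, Sym2.eq_iff] at hxy ⊢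
        rcases hxy with ⟨h1, h2⟩ | ⟨h1, h2⟩
        · exact Or.inl ⟨hinj ha ha' h1, hinj hb hb' h2⟩
        · exact Or.inr ⟨hinj ha hb' h1, hinj hb ha' h2⟩
  constructor
  · constructor
    · constructor
      rw [SimpleGraph.Walk.edges_map]
      exact List.Nodup.map_on hsupp hp.isTrail.edges_nodup
    · intro h
      have h0 := congrArg SimpleGraph.Walk.length h
      rw [SimpleGraph.Walk.length_map] at h0
      have h3 := hp.three_le_length
      simp only [SimpleGraph.Walk.length_nil] at h0
      omega
  · rw [SimpleGraph.Walk.support_map, ← List.map_tail]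
    refine List.Nodup.map_on ?_ hp.support_nodup
    intro x hx y hy
    exact hinj (List.mem_of_mem_tail hx) (List.mem_of_mem_tail hy)

private def upHom : T.G →g G' T ℓ where
  toFun := up T
  map_rel' := by
    intro a b hab
    rw [adj_up_iff]
    exact Or.inl ⟨b.isLt, hab⟩

private lemma vert_cases (v : Fin (T.n + 1)) : (∃ a, v = up T a) ∨ v = Fin.last T.n := by
  rcases Nat.lt_or_ge v.val T.n with h | h
  · exact Or.inl ⟨⟨v.val, h⟩, Fin.ext rfl⟩
  · right; apply Fin.ext; rw [Fin.val_last]; have := v.isLt; omega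

private lemma G'_conn : (G' T ℓ).Connected := by
  rw [connected_iff]
  refine ⟨?_, ⟨Fin.last T.n⟩⟩
  have key : ∀ z : Fin (T.n + 1), (G' T ℓ).Reachable z (up T ℓ) := by
    intro z
    rcases vert_cases T z with ⟨a, rfl⟩ | rfl
    · exact Reachable.map (upHom T ℓ) (T.isTree.isConnected.preconnected a ℓ)
    · exact ((adj_w_iff T ℓ (up T ℓ)).2 rfl).reachable
  intro u v
  exact (key u).trans (key v).symm

private def Gd : SimpleGraph (Fin (T.n + 1)) where
  Adj u v := (G' T ℓ).Adj u v ∧ u ≠ Fin.last T.n ∧ v ≠ Fin.last T.n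
  symm := ⟨fun u v ⟨h, h1, h2⟩ => ⟨h.symm, h2, h1⟩⟩
  loopless := ⟨fun u ⟨h, _, _⟩ => (G' T ℓ).loopless.irrefl u h⟩

private lemma val_lt_of_ne_last {v : Fin (T.n + 1)} (h : v ≠ Fin.last T.n) : v.val < T.n := by
  have h2 := v.isLt
  rcases Nat.lt_or_ge v.val T.n with h3 | h3
  · exact h3
  · exfalso; apply h; apply Fin.ext; rw [Fin.val_last]; omega

private def downHom : Gd T ℓ →g T.G where
  toFun := fun u => if h : u.val < T.n then ⟨u.val, h⟩ else ℓ
  map_rel' := by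
    rintro x y ⟨hadj, hx, hy⟩
    have hx' := val_lt_of_ne_last T hx
    have hy' := val_lt_of_ne_last T hy
    rw [dif_pos hx', dif_pos hy']
    rcases hadj with h | ⟨h1, h2⟩ | ⟨h1, h2⟩
    · rwa [oldAdj_iff T hx' hy'] at h
    · omega
    · omega

private lemma downHom_apply {z : Fin (T.n + 1)} (h : z.val < T.n) :
    downHom T ℓ z = ⟨z.val, h⟩ := by
  show (if h' : z.val < T.n then (⟨z.val, h'⟩ : Fin T.n) else ℓ) = ⟨z.val, h⟩
  rw [dif_pos h]

private lemma G'_acyclic : (G' T ℓ).IsAcyclic := by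
  intro v c hc
  have hw : Fin.last T.n ∉ c.support := by
    intro hw
    have hc' := hc.rotate hw
    set c' := c.rotate _ hw with hc'def
    have hnn := hc'.not_nil
    rw [SimpleGraph.Walk.not_nil_iff] at hnn
    obtain ⟨y, hadj, q, hq⟩ := hnn
    have hy : y = up T ℓ := (adj_w_iff T ℓ y).1 hadj
    subst hy
    have hqlen : 2 ≤ q.length := by
      have h3 := hc'.three_le_length
      rw [hq, SimpleGraph.Walk.length_cons] at h3
      omega
    have hqnn : ¬ q.reverse.Nil := by
      rw [SimpleGraph.Walk.nil_iff_length_eq, SimpleGraph.Walk.length_reverse]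
      omega
    rw [SimpleGraph.Walk.not_nil_iff] at hqnn
    obtain ⟨z, hadj2, q2, hq2⟩ := hqnn
    have hz : z = up T ℓ := (adj_w_iff T ℓ z).1 hadj2
    subst hz
    have hmem : s(Fin.last T.n, up T ℓ) ∈ q.edges := by
      have hm2 : s(Fin.last T.n, up T ℓ) ∈ q.reverse.edges := by
        rw [hq2, SimpleGraph.Walk.edges_cons]
        exact List.mem_cons_self
      rwa [SimpleGraph.Walk.edges_reverse, List.mem_reverse] at hm2
    have ht := hc'.isTrail.edges_nodup
    rw [hq, SimpleGraph.Walk.edges_cons, List.nodup_cons] at ht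
    exact ht.1 hmem
  have hall : ∀ e ∈ c.edges, e ∈ (Gd T ℓ).edgeSet := by
    intro e he
    induction e using Sym2.inductionOn with
    | hf x y =>
      rw [SimpleGraph.mem_edgeSet]
      refine ⟨c.adj_of_mem_edges he, ?_, ?_⟩
      · intro hxw; exact hw (hxw ▸ c.fst_mem_support_of_mem_edges he)
      · intro hyw; exact hw (hyw ▸ c.snd_mem_support_of_mem_edges he)
  have hc2 := hc.transfer hall
  have hinj : Set.InjOn (downHom T ℓ) {z | z ∈ (c.transfer (Gd T ℓ) hall).support} := by
    intro x hx y hy hxy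
    rw [Set.mem_setOf_eq, SimpleGraph.Walk.support_transfer] at hx hy
    have hx' := val_lt_of_ne_last T (fun h => hw (h ▸ hx))
    have hy' := val_lt_of_ne_last T (fun h => hw (h ▸ hy))
    rw [downHom_apply T ℓ hx', downHom_apply T ℓ hy'] at hxy
    exact Fin.ext (by simpa using hxy)
  exact T.isTree.IsAcyclic _ (isCycle_map_of_injOn (downHom T ℓ) hc2 hinj)

@[reducible] private def Tnew : SignedTree where
  n := T.n + 1
  G := G' T ℓ
  adjDec := inferInstance
  isTree := ⟨G'_conn T ℓ, G'_acyclic T ℓ⟩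
  sgn := sgn' T c

end AddLeaf2

section AddLeaf3
variable (T : SignedTree) (ℓ : Fin T.n) (c : Bool)

private def upEmb : Fin T.n ↪ Fin (T.n + 1) :=
  ⟨up T, fun a b h => by
    have h2 : (up T a).val = (up T b).val := congrArg Fin.val h
    exact Fin.ext h2⟩

private lemma up_ne_last (u : Fin T.n) : up T u ≠ Fin.last T.n := by
  intro h
  have := congrArg Fin.val h
  rw [Fin.val_last] at this
  exact absurd this (Nat.ne_of_lt u.isLt)

private lemma filter_nbhd_up (u : Fin T.n) (b : Bool) :
    letI := T.adjDec
    letI := (Tnew T ℓ c).adjDec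
    (((Tnew T ℓ c).G.neighborFinset (up T u)).filter
        (fun z => (Tnew T ℓ c).sgn s(up T u, z) = b)) =
      ((T.G.neighborFinset u).filter (fun z => T.sgn s(u, z) = b)).map (upEmb T) ∪
        (if u = ℓ ∧ b = c then {Fin.last T.n} else ∅) := by
  letI := T.adjDec
  letI := (Tnew T ℓ c).adjDec
  ext z
  simp only [Finset.mem_filter, SimpleGraph.mem_neighborFinset, Finset.mem_union,
    Finset.mem_map]
  constructor
  · rintro ⟨hadj, hsgn⟩
    rcases (adj_up_iff T ℓ u z).1 hadj with ⟨hz, hadj'⟩ | ⟨rfl, rfl⟩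
    · left
      have hrw : (Tnew T ℓ c).sgn s(up T u, z) = T.sgn s(u, (⟨z.val, hz⟩ : Fin T.n)) :=
        sgn'_old (u := up T u) (v := z) T c u.isLt hz
      refine ⟨⟨z.val, hz⟩, ⟨hadj', ?_⟩, Fin.ext rfl⟩
      rw [← hrw]
      exact hsgn
    · right
      have hc : c = b := by
        have hrw : (Tnew T u c).sgn s(up T u, Fin.last T.n) = c :=
          sgn'_new_right (u := up T u) (v := Fin.last T.n) T c (Fin.val_last _)
        rw [← hrw]
        exact hsgn
      rw [if_pos ⟨rfl, hc.symm⟩]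
      exact Finset.mem_singleton_self _
  · rintro (⟨z0, ⟨hadj0, hsgn0⟩, rfl⟩ | hmem)
    · constructor
      · exact (adj_up_iff T ℓ u _).2 (Or.inl ⟨z0.isLt, hadj0⟩)
      · have hrw : (Tnew T ℓ c).sgn s(up T u, upEmb T z0) = T.sgn s(u, z0) :=
          sgn'_old (u := up T u) (v := upEmb T z0) T c u.isLt z0.isLt
        exact hrw.trans hsgn0
    · split_ifs at hmem with hcond
      · obtain ⟨rfl, rfl⟩ := hcond
        rw [Finset.mem_singleton] at hmem
        subst hmem
        constructor
        · exact (adj_up_iff T u u _).2 (Or.inr ⟨rfl, rfl⟩)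
        · exact sgn'_new_right (u := up T u) (v := Fin.last T.n) T b (Fin.val_last _)
      · exact absurd hmem (Finset.notMem_empty _)

private lemma sdeg_up (u : Fin T.n) :
    (Tnew T ℓ c).sdeg (up T u) =
      T.sdeg u + if u = ℓ then (if c then 1 else -1) else 0 := by
  letI := T.adjDec
  letI := (Tnew T ℓ c).adjDec
  have hdisj : ∀ b : Bool, Disjoint
      (((T.G.neighborFinset u).filter (fun z => T.sgn s(u, z) = b)).map (upEmb T))
      ({Fin.last T.n} : Finset (Fin (T.n + 1))) := by
    intro b
    rw [Finset.disjoint_singleton_right, Finset.mem_map]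
    rintro ⟨z0, _, hz0⟩
    exact up_ne_last T z0 hz0
  show (_ : ℤ) - _ = _
  rw [filter_nbhd_up T ℓ c u true, filter_nbhd_up T ℓ c u false]
  by_cases hu : u = ℓ
  · subst hu
    cases c
    · rw [if_neg (by simp), if_pos ⟨rfl, rfl⟩, Finset.union_empty,
        Finset.card_union_of_disjoint (hdisj false), Finset.card_map, Finset.card_map,
        Finset.card_singleton]
      unfold SignedTree.sdeg
      push_cast
      simp only [eq_self_iff_true, if_true]
      ring
    · rw [if_pos ⟨rfl, rfl⟩, if_neg (by simp), Finset.union_empty,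
        Finset.card_union_of_disjoint (hdisj true), Finset.card_map, Finset.card_map,
        Finset.card_singleton]
      unfold SignedTree.sdeg
      push_cast
      simp only [eq_self_iff_true, if_true]
      ring
  · rw [if_neg (by simp [hu]), if_neg (by simp [hu]), Finset.union_empty, Finset.union_empty,
      Finset.card_map, Finset.card_map, if_neg hu]
    unfold SignedTree.sdeg
    push_cast
    ring

private lemma sdeg_last :
    (Tnew T ℓ c).sdeg (Fin.last T.n) = if c then 1 else -1 := by
  letI := (Tnew T ℓ c).adjDec
  have hnb : (Tnew T ℓ c).G.neighborFinset (Fin.last T.n) = {up T ℓ} := by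
    ext z
    rw [SimpleGraph.mem_neighborFinset, Finset.mem_singleton]
    exact adj_w_iff T ℓ z
  have hsgn : ∀ z ∈ ({up T ℓ} : Finset (Fin (T.n + 1))),
      (Tnew T ℓ c).sgn s(Fin.last T.n, z) = c := by
    intro z _
    exact sgn'_new_left T c (Fin.val_last _)
  show (_ : ℤ) - _ = _
  rw [hnb]
  cases c
  · rw [Finset.filter_singleton, Finset.filter_singleton]
    simp [sgn'_new_left T false (Fin.val_last _), Tnew]
  · rw [Finset.filter_singleton, Finset.filter_singleton]
    simp [sgn'_new_left T true (Fin.val_last _), Tnew]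

end AddLeaf3

lemma addLeaf (T : SignedTree) (ℓ : Fin T.n) (c : Bool) :
    ∃ (T' : SignedTree) (f : Fin T.n → Fin T'.n) (vnew : Fin T'.n),
      T'.n = T.n + 1 ∧ Function.Injective f ∧
      (∀ u, T'.sdeg (f u) = T.sdeg u + if u = ℓ then (if c then 1 else -1) else 0) ∧
      (∀ u, f u ≠ vnew) ∧ T'.sdeg vnew = (if c then 1 else -1) ∧
      (∀ v, (∃ u, f u = v) ∨ v = vnew) := by
  refine ⟨Tnew T ℓ c, up T, Fin.last T.n, rfl, (upEmb T).injective, sdeg_up T ℓ c, up_ne_last T,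
    sdeg_last T ℓ c, fun v => (vert_cases T v).imp (fun ⟨a, h⟩ => ⟨a, h.symm⟩) id⟩

lemma graft (T : SignedTree) (ℓ : Fin T.n) (t : ℕ) :
    ∃ (T' : SignedTree) (f : Fin T.n → Fin T'.n),
      T'.n = T.n + t ∧ Function.Injective f ∧
      (∀ u, T'.sdeg (f u) = T.sdeg u + if u = ℓ then (t : ℤ) else 0) ∧
      (∀ v, (∃ u, f u = v) ∨ T'.sdeg v = 1) ∧
      (t ≠ 0 → ∃ v, T'.sdeg v = 1) := by
  induction t with
  | zero =>
    exact ⟨T, id, rfl, fun a b h => h, fun u => by simp, fun v => Or.inl ⟨v, rfl⟩,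
      fun h => absurd rfl h⟩
  | succ t ih =>
    obtain ⟨T1, f1, hn1, hinj1, hsdeg1, htot1, -⟩ := ih
    obtain ⟨T2, g, vnew, hn2, hinjg, hsdeg2, hgne, hsnew, htot2⟩ := addLeaf T1 (f1 ℓ) true
    refine ⟨T2, g ∘ f1, by omega, hinjg.comp hinj1, ?_, ?_, ?_⟩
    · intro u
      have h2 := hsdeg2 (f1 u)
      simp only [if_true] at h2
      rw [Function.comp_apply, h2, hsdeg1 u]
      by_cases hu : u = ℓ
      · subst hu
        rw [if_pos rfl, if_pos rfl, if_pos rfl]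
        push_cast
        ring
      · rw [if_neg hu, if_neg hu, if_neg (fun h => hu (hinj1 h))]
        ring
    · intro v
      rcases htot2 v with ⟨x, rfl⟩ | rfl
      · by_cases hxl : x = f1 ℓ
        · exact Or.inl ⟨ℓ, by rw [hxl]; rfl⟩
        · rcases htot1 x with ⟨u, rfl⟩ | hx1
          · exact Or.inl ⟨u, rfl⟩
          · right
            have h2 := hsdeg2 x
            rw [if_neg hxl, hx1] at h2
            simpa using h2
      · right
        simpa using hsnew
    · intro _
      exact ⟨vnew, by simpa using hsnew⟩

def T0 : SignedTree where
  n := 1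
  G := ⊥
  adjDec := fun _ _ => Decidable.isFalse (by simp)
  isTree := by
    constructor
    · rw [connected_iff]
      exact ⟨fun a b => (Subsingleton.elim a b) ▸ Reachable.refl a, ⟨0⟩⟩
    · intro v p hp
      exact hp.ne_bot rfl
  sgn := fun _ => true

lemma T0_sdeg (v : Fin T0.n) : T0.sdeg v = 0 := by
  letI := T0.adjDec
  have h : (T0.G.neighborFinset v : Finset (Fin T0.n)) = ∅ := by
    ext z
    rw [SimpleGraph.mem_neighborFinset]
    simp only [Finset.notMem_empty, iff_false]
    exact fun hadj => hadj.elim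
  unfold SignedTree.sdeg
  rw [h]
  simp

lemma T0_zero (u : Fin T0.n) : u = ⟨0, Nat.zero_lt_one⟩ := by
  have h : T0.n = 1 := rfl
  have h2 := u.isLt
  apply Fin.ext
  omega

lemma base_exists : ∃ T : SignedTree, Set.range T.sdeg = {1, 0} ∧ T.n = 4 := by
  obtain ⟨T1, f1, v1, hn1, _, hs1, hne1, hv1, htot1⟩ := addLeaf T0 ⟨0, Nat.zero_lt_one⟩ true
  obtain ⟨T2, f2, v2, hn2, _, hs2, hne2, hv2, htot2⟩ := addLeaf T1 v1 false
  obtain ⟨T3, f3, v3, hn3, _, hs3, hne3, hv3, htot3⟩ := addLeaf T2 v2 true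
  simp only [if_true] at hs1 hv1 hs3 hv3
  simp only [if_neg (Bool.false_ne_true)] at hs2 hv2
  have hT1 : ∀ u, T1.sdeg (f1 u) = 1 := by
    intro u
    rw [hs1 u, T0_sdeg, if_pos (T0_zero u)]
    ring
  have hT1v : T1.sdeg v1 = 1 := hv1
  have hT1all : ∀ x, T1.sdeg x = 1 := by
    intro x
    rcases htot1 x with ⟨u, rfl⟩ | rfl
    · exact hT1 u
    · exact hT1v
  have hT2f : ∀ x, T2.sdeg (f2 x) = if x = v1 then 0 else 1 := by
    intro x
    rw [hs2 x, hT1all x]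
    by_cases hxv : x = v1
    · rw [if_pos hxv, if_pos hxv]; ring
    · rw [if_neg hxv, if_neg hxv]; ring
  have hT3f : ∀ x, T3.sdeg (f3 (f2 x)) = if x = v1 then 0 else 1 := by
    intro x
    rw [hs3 (f2 x), hT2f x, if_neg (fun h => hne2 x h)]
    ring
  have hT3v2 : T3.sdeg (f3 v2) = 0 := by
    rw [hs3 v2, hv2, if_pos rfl]
    ring
  have h0 : T0.n = 1 := rfl
  refine ⟨T3, ?_, by omega⟩
  ext d
  constructor
  · rintro ⟨v, rfl⟩
    rcases htot3 v with ⟨x, rfl⟩ | rfl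
    · rcases htot2 x with ⟨y, rfl⟩ | rfl
      · rw [hT3f y]
        by_cases hy : y = v1
        · rw [if_pos hy]; right; rfl
        · rw [if_neg hy]; left; rfl
      · rw [hT3v2]; right; rfl
    · rw [hv3]; left; rfl
  · intro hd
    rcases hd with rfl | rfl
    · exact ⟨v3, hv3⟩
    · exact ⟨f3 v2, hT3v2⟩

lemma construct (X : Finset ℤ) (hx : ∀ x ∈ X, 1 < x) :
    ∃ T : SignedTree, Set.range T.sdeg = insert 1 (insert 0 (↑X : Set ℤ)) ∧
      (T.n : ℤ) = 4 + ∑ x ∈ X, (x - 1) := by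
  induction X using Finset.induction with
  | empty =>
    obtain ⟨T, hr, hn⟩ := base_exists
    refine ⟨T, ?_, by rw [hn]; simp⟩
    rw [hr]
    simp
  | @insert a s ha ih =>
    obtain ⟨T, hrange, hcard⟩ := ih (fun y hy => hx y (Finset.mem_insert_of_mem hy))
    have ha2 : 1 < a := hx a (Finset.mem_insert_self a s)
    have h1mem : (1 : ℤ) ∈ Set.range T.sdeg := by
      rw [hrange]; exact Set.mem_insert 1 _
    obtain ⟨ℓ, hℓ⟩ := h1mem
    set t : ℕ := (a - 1).toNat with htdef
    have ht : (t : ℤ) = a - 1 := Int.toNat_of_nonneg (by omega)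
    have htne : t ≠ 0 := by omega
    obtain ⟨T', f, hn, hinj, hsdeg, htot, hone⟩ := graft T ℓ t
    have hrange' : Set.range T'.sdeg = insert a (Set.range T.sdeg) := by
      ext d
      constructor
      · rintro ⟨v, rfl⟩
        rcases htot v with ⟨u, rfl⟩ | hv1
        · by_cases hu : u = ℓ
          · subst hu
            rw [hsdeg u, hℓ, if_pos rfl]
            left
            omega
          · rw [hsdeg u, if_neg hu]
            right
            exact ⟨u, by ring⟩
        · rw [hv1]
          right
          rw [← hℓ]
          exact ⟨ℓ, rfl⟩
      · intro hd
        rcases hd with rfl | ⟨u, rfl⟩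
        · refine ⟨f ℓ, ?_⟩
          rw [hsdeg ℓ, hℓ, if_pos rfl]
          omega
        · by_cases hu : u = ℓ
          · subst hu
            rw [hℓ]
            exact hone htne
          · exact ⟨f u, by rw [hsdeg u, if_neg hu]; ring⟩
    refine ⟨T', ?_, ?_⟩
    · rw [hrange', hrange]
      push_cast
      ext y
      simp only [Set.mem_insert_iff, Finset.coe_insert, Set.mem_insert_iff, Finset.mem_coe]
      tauto
    · rw [Finset.sum_insert ha]
      have : (T'.n : ℤ) = (T.n : ℤ) + t := by rw [hn]; push_cast; ring
      rw [this, hcard]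
      omega

section Lower
variable (T : SignedTree)

private def Gneg : SimpleGraph (Fin T.n) where
  Adj u v := T.G.Adj u v ∧ T.sgn s(u, v) = false
  symm := by
    refine ⟨?_⟩
    rintro u v ⟨h1, h2⟩
    refine ⟨h1.symm, ?_⟩
    rwa [Sym2.eq_swap]
  loopless := ⟨fun u h => T.G.loopless.irrefl u h.1⟩

private instance : DecidableRel (Gneg T).Adj := fun u v => by
  letI := T.adjDec
  unfold Gneg
  infer_instance

private lemma gneg_nbhd (v : Fin T.n) :
    letI := T.adjDec
    (Gneg T).neighborFinset v = (T.G.neighborFinset v).filter (fun w => T.sgn s(v, w) = false) := by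
  letI := T.adjDec
  ext z
  simp only [SimpleGraph.mem_neighborFinset, Finset.mem_filter]
  exact Iff.rfl

lemma lower_bound_s12 (X : Finset ℤ) (hx : ∀ x ∈ X, 1 < x)
    (T : SignedTree) (hreal : Set.range T.sdeg = insert 1 (insert 0 (↑X : Set ℤ)))
    (a b : Fin T.n) (hadj : T.G.Adj a b) (hneg : T.sgn s(a, b) = false)
    (ha : T.sdeg a ≠ 0) :
    5 + ∑ x ∈ X, (x - 1) ≤ (T.n : ℤ) := by
  classical
  letI := T.adjDec
  -- membership facts
  have hmemD : ∀ v : Fin T.n, T.sdeg v = 1 ∨ T.sdeg v = 0 ∨ T.sdeg v ∈ X := by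
    intro v
    have h : T.sdeg v ∈ insert 1 (insert 0 (↑X : Set ℤ)) := by
      rw [← hreal]; exact Set.mem_range_self v
    simpa using h
  have hpos : ∀ v : Fin T.n, T.sdeg v ≠ 0 → 1 ≤ T.sdeg v := by
    intro v hv
    rcases hmemD v with h | h | h
    · omega
    · omega
    · have := hx _ h; omega
  -- degree splitting
  have hsdeg_eq : ∀ v : Fin T.n, T.sdeg v =
      (((T.G.neighborFinset v).filter (fun w => T.sgn s(v, w) = true)).card : ℤ) -
      (((T.G.neighborFinset v).filter (fun w => T.sgn s(v, w) = false)).card : ℤ) := by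
    intro v; rfl
  have hdeg_split : ∀ v : Fin T.n,
      ((T.G.neighborFinset v).filter (fun w => T.sgn s(v, w) = true)).card +
      ((T.G.neighborFinset v).filter (fun w => T.sgn s(v, w) = false)).card = T.G.degree v := by
    intro v
    have h := Finset.card_filter_add_card_filter_not
      (s := T.G.neighborFinset v) (p := fun w => T.sgn s(v, w) = true)
    rw [Finset.filter_congr (fun w _ => by
      simp only [Bool.not_eq_true] : ∀ w ∈ T.G.neighborFinset v,
        (¬ (T.sgn s(v, w) = true)) ↔ (T.sgn s(v, w) = false))] at h
    exact h
  have hdneg : ∀ v : Fin T.n, (Gneg T).degree v =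
      ((T.G.neighborFinset v).filter (fun w => T.sgn s(v, w) = false)).card := by
    intro v
    show ((Gneg T).neighborFinset v).card = _
    rw [gneg_nbhd T v]
  -- handshakes
  have hhand : ∑ v, T.G.degree v = 2 * T.G.edgeFinset.card :=
    SimpleGraph.sum_degrees_eq_twice_card_edges T.G
  have htree : T.G.edgeFinset.card + 1 = T.n := by
    have h := T.isTree.card_edgeFinset
    rwa [Fintype.card_fin] at h
  set m : ℕ := (Gneg T).edgeFinset.card with hmdef
  have hhandneg : ∑ v, (Gneg T).degree v = 2 * m :=
    SimpleGraph.sum_degrees_eq_twice_card_edges (Gneg T)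
  -- sum of signed degrees
  have hsum : ∑ v, T.sdeg v = 2 * ((T.n : ℤ) - 1) - 4 * (m : ℤ) := by
    have h1 : ∀ v : Fin T.n, T.sdeg v = (T.G.degree v : ℤ) - 2 * ((Gneg T).degree v : ℤ) := by
      intro v
      have h2 : (((T.G.neighborFinset v).filter (fun w => T.sgn s(v, w) = true)).card : ℤ) +
          (((T.G.neighborFinset v).filter (fun w => T.sgn s(v, w) = false)).card : ℤ) =
          (T.G.degree v : ℤ) := by exact_mod_cast congrArg Nat.cast (hdeg_split v)
      rw [hsdeg_eq v]
      have h3 : ((Gneg T).degree v : ℤ) =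
          (((T.G.neighborFinset v).filter (fun w => T.sgn s(v, w) = false)).card : ℤ) := by
        exact_mod_cast congrArg Nat.cast (hdneg v)
      linarith
    rw [Finset.sum_congr rfl (fun v _ => h1 v), Finset.sum_sub_distrib]
    have h4 : ∑ v, (T.G.degree v : ℤ) = 2 * ((T.n : ℤ) - 1) := by
      rw [← Nat.cast_sum, hhand]
      have h6 := htree
      push_cast
      omega
    have h5 : ∑ v, 2 * ((Gneg T).degree v : ℤ) = 4 * (m : ℤ) := by
      rw [← Finset.mul_sum, ← Nat.cast_sum, hhandneg]
      push_cast
      ring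
    rw [h4, h5]
  -- zero set
  set Z : Finset (Fin T.n) := Finset.univ.filter (fun v => T.sdeg v = 0) with hZdef
  have haZ : a ∉ Z := by
    rw [hZdef, Finset.mem_filter]
    tauto
  have hZne : ∀ v ∈ Z, 1 ≤ (Gneg T).degree v := by
    intro v hv
    rw [hZdef, Finset.mem_filter] at hv
    by_contra hcon
    have hdz : (Gneg T).degree v = 0 := by omega
    have hftz : ((T.G.neighborFinset v).filter (fun w => T.sgn s(v, w) = false)).card = 0 := by
      rw [← hdneg]; exact hdz
    have hptz : ((T.G.neighborFinset v).filter (fun w => T.sgn s(v, w) = true)).card = 0 := by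
      have := hsdeg_eq v
      rw [hv.2, hftz] at this
      omega
    have hdegz : T.G.degree v = 0 := by
      rw [← hdeg_split v, hftz, hptz]
    -- but v is connected to a ≠ v
    have hva : v ≠ a := fun h => ha (h ▸ hv.2)
    obtain ⟨p⟩ := T.isTree.isConnected.preconnected v a
    have hnn : ¬ p.Nil := SimpleGraph.Walk.not_nil_of_ne hva
    rw [SimpleGraph.Walk.not_nil_iff] at hnn
    obtain ⟨u, hu, -, -⟩ := hnn
    have : 0 < T.G.degree v := (SimpleGraph.degree_pos_iff_exists_adj T.G v).2 ⟨u, hu⟩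
    omega
  have hdnega : 1 ≤ (Gneg T).degree a :=
    (SimpleGraph.degree_pos_iff_exists_adj (Gneg T) a).2 ⟨b, hadj, hneg⟩
  have hzcount : (Z.card : ℤ) + 1 ≤ 2 * (m : ℤ) := by
    have h1 : Z.card + 1 ≤ ∑ v ∈ insert a Z, (Gneg T).degree v := by
      calc Z.card + 1 = ∑ _v ∈ insert a Z, 1 := by
            simp [Finset.sum_const, Finset.card_insert_of_notMem haZ]
        _ ≤ ∑ v ∈ insert a Z, (Gneg T).degree v := by
            apply Finset.sum_le_sum
            intro v hv
            rcases Finset.mem_insert.1 hv with rfl | hv2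
            · exact hdnega
            · exact hZne v hv2
    have h2 : ∑ v ∈ insert a Z, (Gneg T).degree v ≤ ∑ v, (Gneg T).degree v :=
      Finset.sum_le_sum_of_subset (Finset.subset_univ _)
    have h3 := hhandneg
    have : Z.card + 1 ≤ 2 * m := by omega
    exact_mod_cast this
  have hm1 : 1 ≤ (m : ℤ) := by
    have h2 : (Gneg T).degree a ≤ ∑ v, (Gneg T).degree v :=
      Finset.single_le_sum (f := fun v => (Gneg T).degree v) (fun v _ => Nat.zero_le _)
        (Finset.mem_univ a)
    have : 1 ≤ m := by omega
    exact_mod_cast this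
  -- representatives
  have hrep : ∀ x ∈ X, ∃ v : Fin T.n, T.sdeg v = x := by
    intro x hxm
    have hmem : x ∈ Set.range T.sdeg := by
      rw [hreal]
      exact Set.mem_insert_iff.2 (Or.inr (Set.mem_insert_iff.2 (Or.inr (by exact_mod_cast hxm))))
    exact hmem
  haveI : Inhabited (Fin T.n) := ⟨a⟩
  choose! r hr using hrep
  have hinjOn : ∀ x ∈ X, ∀ y ∈ X, r x = r y → x = y := by
    intro x hxm y hym hxy
    rw [← hr x hxm, ← hr y hym, hxy]
  set R : Finset (Fin T.n) := X.image r with hRdef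
  have hsumR : ∑ v ∈ R, T.sdeg v = ∑ x ∈ X, x := by
    rw [hRdef, Finset.sum_image hinjOn]
    exact Finset.sum_congr rfl hr
  have hcardR : R.card = X.card := Finset.card_image_of_injOn hinjOn
  have hZR : Disjoint Z R := by
    rw [Finset.disjoint_left]
    intro v hvZ hvR
    rw [hZdef, Finset.mem_filter] at hvZ
    rw [hRdef, Finset.mem_image] at hvR
    obtain ⟨x, hxm, rfl⟩ := hvR
    rw [hr x hxm] at hvZ
    have := hx x hxm
    omega
  set A : Finset (Fin T.n) := Z ∪ R with hAdef
  have hcardA : A.card = Z.card + X.card := by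
    rw [hAdef, Finset.card_union_of_disjoint hZR, hcardR]
  have hsumA : ∑ v ∈ A, T.sdeg v = ∑ x ∈ X, x := by
    rw [hAdef, Finset.sum_union hZR, hsumR]
    have : ∑ v ∈ Z, T.sdeg v = 0 := by
      apply Finset.sum_eq_zero
      intro v hv
      rw [hZdef, Finset.mem_filter] at hv
      exact hv.2
    rw [this]
    ring
  have hsplit : ∑ v ∈ Finset.univ \ A, T.sdeg v + ∑ v ∈ A, T.sdeg v = ∑ v, T.sdeg v :=
    Finset.sum_sdiff (Finset.subset_univ A)
  have hrest : ((Finset.univ \ A).card : ℤ) ≤ ∑ v ∈ Finset.univ \ A, T.sdeg v := by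
    calc ((Finset.univ \ A).card : ℤ) = ∑ _v ∈ Finset.univ \ A, (1 : ℤ) := by
          rw [Finset.sum_const]; push_cast; ring
      _ ≤ ∑ v ∈ Finset.univ \ A, T.sdeg v := by
          apply Finset.sum_le_sum
          intro v hv
          rw [Finset.mem_sdiff, hAdef, Finset.mem_union] at hv
          apply hpos
          intro h0
          exact hv.2 (Or.inl (by rw [hZdef, Finset.mem_filter]; exact ⟨Finset.mem_univ v, h0⟩))
  have hcardsd : ((Finset.univ \ A).card : ℤ) = (T.n : ℤ) - Z.card - X.card := by
    rw [Finset.card_sdiff_of_subset (Finset.subset_univ A), hcardA]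
    have hle : Z.card + X.card ≤ T.n := by
      have := Finset.card_le_univ A
      rw [hcardA] at this
      simpa [Fintype.card_fin] using this
    push_cast [Finset.card_univ, Fintype.card_fin]
    omega
  have hsumX : ∑ x ∈ X, (x - 1) = (∑ x ∈ X, x) - X.card := by
    rw [Finset.sum_sub_distrib, Finset.sum_const]
    push_cast
    ring
  -- final arithmetic
  have hfinal : (∑ x ∈ X, x) + ((T.n : ℤ) - Z.card - X.card) ≤ 2 * ((T.n : ℤ) - 1) - 4 * m := by
    rw [← hsum, ← hsplit, hsumA]
    linarith [hrest, hcardsd]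
  rw [hsumX]
  linarith [hzcount, hm1, hfinal]

end Lower

/-- In an order-optimal signed tree realizing `D = {1, 0} ∪ X`
(`X` a set of distinct integers each greater than 1), every negative edge has both
endpoints of signed degree 0. -/
theorem stmt_12 (X : Finset ℤ) (hx : ∀ x ∈ X, 1 < x)
    (D : Set ℤ) (hD : D = insert 1 (insert 0 (↑X : Set ℤ)))
    (T : SignedTree) (hreal : T.Realizes D)
    (hopt : ∀ T' : SignedTree, T'.Realizes D → T.n ≤ T'.n)
    (a b : Fin T.n) (hadj : T.G.Adj a b) (hneg : T.sgn s(a, b) = false) :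
    T.sdeg a = 0 ∧ T.sdeg b = 0 := by
  have key : ∀ p q : Fin T.n, T.G.Adj p q → T.sgn s(p, q) = false → T.sdeg p = 0 := by
    intro p q hpq hnegpq
    by_contra hp
    have hrange : Set.range T.sdeg = insert 1 (insert 0 (↑X : Set ℤ)) := by
      rw [← hD]
      exact hreal.symm
    have hlow := lower_bound_s12 X hx T hrange p q hpq hnegpq hp
    obtain ⟨T', hT'r, hT'n⟩ := construct X hx
    have hopt' := hopt T' (by rw [SignedTree.Realizes, hD, hT'r])
    have hcast : (T.n : ℤ) ≤ (T'.n : ℤ) := by exact_mod_cast hopt'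
    linarith [hlow, hT'n, hcast]
  exact ⟨key a b hadj hneg, key b a hadj.symm (by rwa [Sym2.eq_swap])⟩
end

section
/- Let X = {x_1, ..., x_n} be a finite set of distinct integers each greater than 1, let D = {1, 0} ∪ X, and let (T,s) be a signed tree realizing D whose underlying tree has the minimum possible number of vertices among all signed trees realizing D. Then T has exactly one edge e with s(e) = −. -/
namespace SignedTree

/-- number of positive neighbors, instance-free -/
noncomputable def posn (T : SignedTree) (v : Fin T.n) : ℕ :=
  {w | T.G.Adj v w ∧ T.sgn s(v, w) = true}.ncard

noncomputable def negn (T : SignedTree) (v : Fin T.n) : ℕ :=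
  {w | T.G.Adj v w ∧ T.sgn s(v, w) = false}.ncard

lemma sdeg_eq (T : SignedTree) (v : Fin T.n) :
    T.sdeg v = (T.posn v : ℤ) - T.negn v := by
  letI := T.adjDec
  unfold sdeg posn negn
  congr 2
  · rw [← Set.ncard_coe_finset]; congr 1; ext w
    simp [SimpleGraph.mem_neighborFinset]
  · rw [← Set.ncard_coe_finset]; congr 1; ext w
    simp [SimpleGraph.mem_neighborFinset]

lemma deg_eq (T : SignedTree) (v : Fin T.n) :
    T.deg v = T.posn v + T.negn v := by
  letI := T.adjDec
  unfold deg posn negn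
  have hu : (T.G.neighborFinset v : Set (Fin T.n)) =
      {w | T.G.Adj v w ∧ T.sgn s(v, w) = true} ∪ {w | T.G.Adj v w ∧ T.sgn s(v, w) = false} := by
    ext w
    simp only [Finset.mem_coe, SimpleGraph.mem_neighborFinset, Set.mem_union, Set.mem_setOf_eq]
    constructor
    · intro h
      rcases Bool.eq_false_or_eq_true (T.sgn s(v, w)) with hb | hb
      · exact Or.inl ⟨h, hb⟩
      · exact Or.inr ⟨h, hb⟩
    · rintro (⟨h, _⟩ | ⟨h, _⟩) <;> exact h
  have hd : Disjoint {w | T.G.Adj v w ∧ T.sgn s(v, w) = true}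
      {w | T.G.Adj v w ∧ T.sgn s(v, w) = false} := by
    rw [Set.disjoint_left]
    rintro w ⟨-, h1⟩ ⟨-, h2⟩
    rw [h1] at h2; simp at h2
  rw [← SimpleGraph.card_neighborFinset_eq_degree, ← Set.ncard_coe_finset, hu,
    Set.ncard_union_eq hd (Set.toFinite _) (Set.toFinite _)]

/-- the number of negative edges, instance-free -/
noncomputable def negm (T : SignedTree) : ℕ :=
  {e | e ∈ T.G.edgeSet ∧ T.sgn e = false}.ncard

lemma n_pos (T : SignedTree) : 0 < T.n := by
  have : Nonempty (Fin T.n) := T.isTree.isConnected.nonempty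
  exact this.elim fun i => i.pos

lemma sum_sdeg (T : SignedTree) :
    ∑ v, T.sdeg v = 2 * ((T.n : ℤ) - 1) - 4 * T.negm := by
  classical
  letI := T.adjDec
  let Gp : SimpleGraph (Fin T.n) :=
    { Adj := fun a c => T.G.Adj a c ∧ T.sgn s(a, c) = true
      symm := ⟨by rintro a c ⟨h1, h2⟩; exact ⟨h1.symm, by rwa [Sym2.eq_swap]⟩⟩
      loopless := ⟨fun a h => T.G.loopless.irrefl a h.1⟩ }
  let Gn : SimpleGraph (Fin T.n) :=
    { Adj := fun a c => T.G.Adj a c ∧ T.sgn s(a, c) = false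
      symm := ⟨by rintro a c ⟨h1, h2⟩; exact ⟨h1.symm, by rwa [Sym2.eq_swap]⟩⟩
      loopless := ⟨fun a h => T.G.loopless.irrefl a h.1⟩ }
  haveI : DecidableRel Gp.Adj := fun a b => instDecidableAnd
  haveI : DecidableRel Gn.Adj := fun a b => instDecidableAnd
  have hdp : ∀ v, Gp.degree v = T.posn v := by
    intro v
    rw [← SimpleGraph.card_neighborFinset_eq_degree, ← Set.ncard_coe_finset]
    unfold posn
    congr 1
    ext w
    simp only [Finset.mem_coe, SimpleGraph.mem_neighborFinset, Set.mem_setOf_eq]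
    exact Iff.rfl
  have hdn : ∀ v, Gn.degree v = T.negn v := by
    intro v
    rw [← SimpleGraph.card_neighborFinset_eq_degree, ← Set.ncard_coe_finset]
    unfold negn
    congr 1
    ext w
    simp only [Finset.mem_coe, SimpleGraph.mem_neighborFinset, Set.mem_setOf_eq]
    exact Iff.rfl
  have hep : Gp.edgeFinset.card = {e | e ∈ T.G.edgeSet ∧ T.sgn e = true}.ncard := by
    rw [← Set.ncard_coe_finset, SimpleGraph.coe_edgeFinset]
    congr 1
    ext e
    induction e with
    | _ x y => simp only [SimpleGraph.mem_edgeSet, Set.mem_setOf_eq]; exact Iff.rfl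
  have hen : Gn.edgeFinset.card = T.negm := by
    rw [← Set.ncard_coe_finset, SimpleGraph.coe_edgeFinset]
    unfold negm
    congr 1
    ext e
    induction e with
    | _ x y => simp only [SimpleGraph.mem_edgeSet, Set.mem_setOf_eq]; exact Iff.rfl
  have hsplit : {e | e ∈ T.G.edgeSet ∧ T.sgn e = true}.ncard + T.negm
      = T.G.edgeFinset.card := by
    unfold negm
    rw [← Set.ncard_coe_finset, SimpleGraph.coe_edgeFinset, ← Set.ncard_union_eq]
    · congr 1
      ext e
      simp only [Set.mem_union, Set.mem_setOf_eq]
      constructor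
      · rintro (⟨h, _⟩ | ⟨h, _⟩) <;> exact h
      · intro h
        rcases Bool.eq_false_or_eq_true (T.sgn e) with hb | hb
        · exact Or.inl ⟨h, hb⟩
        · exact Or.inr ⟨h, hb⟩
    · rw [Set.disjoint_left]
      rintro e ⟨-, h1⟩ ⟨-, h2⟩
      rw [h1] at h2; simp at h2
  have hcard : T.G.edgeFinset.card + 1 = T.n := by
    have := T.isTree.card_edgeFinset
    simpa using this
  have hsum : ∑ v, T.sdeg v = 2 * ({e | e ∈ T.G.edgeSet ∧ T.sgn e = true}.ncard : ℤ)
      - 2 * (T.negm : ℤ) := by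
    have h1 : ∑ v, T.sdeg v = (∑ v, (T.posn v : ℤ)) - ∑ v, (T.negn v : ℤ) := by
      rw [← Finset.sum_sub_distrib]
      exact Finset.sum_congr rfl fun v _ => T.sdeg_eq v
    have h2 : ∑ v, Gp.degree v = 2 * Gp.edgeFinset.card :=
      SimpleGraph.sum_degrees_eq_twice_card_edges Gp
    have h3 : ∑ v, Gn.degree v = 2 * Gn.edgeFinset.card :=
      SimpleGraph.sum_degrees_eq_twice_card_edges Gn
    rw [h1]
    have e2 : ∑ v, (T.posn v : ℤ) = 2 * ({e | e ∈ T.G.edgeSet ∧ T.sgn e = true}.ncard : ℤ) := by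
      rw [← hep]
      exact_mod_cast congrArg (Nat.cast : ℕ → ℤ)
        ((Finset.sum_congr rfl fun v _ => (hdp v).symm).trans h2)
    have e3 : ∑ v, (T.negn v : ℤ) = 2 * (T.negm : ℤ) := by
      rw [← hen]
      exact_mod_cast congrArg (Nat.cast : ℕ → ℤ)
        ((Finset.sum_congr rfl fun v _ => (hdn v).symm).trans h3)
    rw [e2, e3]
  rw [hsum]
  have : ({e | e ∈ T.G.edgeSet ∧ T.sgn e = true}.ncard : ℤ) = (T.n : ℤ) - 1 - T.negm := by
    have hs := hsplit
    have hc := hcard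
    omega
  rw [this]
  ring

lemma exists_adj (T : SignedTree) (h2 : 2 ≤ T.n) (v : Fin T.n) : ∃ w, T.G.Adj v w := by
  have hcard : 1 < Fintype.card (Fin T.n) := by rw [Fintype.card_fin]; omega
  obtain ⟨w, hw⟩ := Fintype.exists_ne_of_one_lt_card hcard v
  obtain ⟨p⟩ := T.isTree.isConnected.preconnected v w
  cases p with
  | nil => exact absurd rfl hw
  | cons h q => exact ⟨_, h⟩

lemma one_le_deg (T : SignedTree) (h2 : 2 ≤ T.n) (v : Fin T.n) : 1 ≤ T.deg v := by
  letI := T.adjDec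
  obtain ⟨w, hw⟩ := T.exists_adj h2 v
  have : 0 < T.G.degree v := by
    rw [SimpleGraph.degree_pos_iff_exists_adj]
    exact ⟨w, hw⟩
  exact this

lemma lower_bound (X : Finset ℤ) (hx : ∀ x ∈ X, 1 < x) (T : SignedTree)
    (hreal : T.Realizes (insert 1 (insert 0 (X : Set ℤ)))) :
    2 * (∑ x ∈ X, x) + 2 - 2 * (X.card : ℤ) ≤ ∑ v, T.sdeg v := by
  classical
  letI := T.adjDec
  have hmem : ∀ v, T.sdeg v = 1 ∨ T.sdeg v = 0 ∨ T.sdeg v ∈ X := by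
    intro v
    have : T.sdeg v ∈ insert 1 (insert 0 (X : Set ℤ)) := by
      rw [hreal]; exact Set.mem_range_self v
    simpa using this
  have hsur : ∀ d ∈ insert (1:ℤ) (insert 0 (X : Set ℤ)), ∃ v, T.sdeg v = d := by
    intro d hd
    rw [hreal] at hd
    exact hd
  obtain ⟨v0, hv0⟩ := hsur 0 (by simp)
  obtain ⟨v1, hv1⟩ := hsur 1 (by simp)
  have hn2 : 2 ≤ T.n := by
    have : (1:ℤ) < Fintype.card (Fin T.n) := by
      have hne : v0 ≠ v1 := by
        intro h; rw [h, hv1] at hv0; exact one_ne_zero hv0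
      exact_mod_cast Fintype.one_lt_card_iff.mpr ⟨v0, v1, hne⟩
    simp at this; omega
  have nonneg : ∀ v, 0 ≤ T.sdeg v := by
    intro v
    rcases hmem v with h | h | h
    · omega
    · omega
    · exact le_of_lt (lt_trans one_pos (hx _ h))
  have leaf : ∀ v, T.deg v = 1 → T.sdeg v = 1 := by
    intro v hdv
    have hd := T.deg_eq v
    have hs := T.sdeg_eq v
    have hnn := nonneg v
    omega
  have hgex : ∀ x : ℤ, ∃ v : Fin T.n, x ∈ X → T.sdeg v = x := by
    intro x
    by_cases hxX : x ∈ X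
    · obtain ⟨v, hv⟩ := hsur x (by simp [hxX])
      exact ⟨v, fun _ => hv⟩
    · exact ⟨v0, fun h => absurd h hxX⟩
  choose g hg using hgex
  set A : Finset (Fin T.n) := X.image g with hA
  have hinj : ∀ x ∈ X, ∀ y ∈ X, g x = g y → x = y := by
    intro x hxm y hym h
    rw [← hg x hxm, ← hg y hym, h]
  have hsumA : ∑ v ∈ A, T.sdeg v = ∑ x ∈ X, x := by
    rw [hA, Finset.sum_image hinj]
    exact Finset.sum_congr rfl fun x hxm => hg x hxm
  have hcardA : A.card = X.card := Finset.card_image_of_injOn fun x hxm y hym h => hinj x hxm y hym h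
  have hsdegA : ∀ v ∈ A, 2 ≤ T.sdeg v := by
    intro v hv
    rw [hA, Finset.mem_image] at hv
    obtain ⟨x, hxm, rfl⟩ := hv
    rw [hg x hxm]
    exact hx x hxm
  set L : Finset (Fin T.n) := Finset.univ.filter (fun v => T.deg v = 1) with hL
  have hdisj : Disjoint L A := by
    rw [Finset.disjoint_left]
    intro v hvL hvA
    rw [hL, Finset.mem_filter] at hvL
    have h1 := leaf v hvL.2
    have h2 := hsdegA v hvA
    omega
  set R : Finset (Fin T.n) := Finset.univ \ (L ∪ A) with hR
  have hunion : (L ∪ A) ∪ R = Finset.univ := by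
    rw [hR, Finset.union_sdiff_of_subset (Finset.subset_univ _)]
  have hsplit : ∀ f : Fin T.n → ℤ, ∑ v, f v = ∑ v ∈ L, f v + ∑ v ∈ A, f v + ∑ v ∈ R, f v := by
    intro f
    rw [← hunion, Finset.sum_union (by rw [hR]; exact Finset.disjoint_sdiff), Finset.sum_union hdisj]
  have hdisj2 : Disjoint (L ∪ A) R := by rw [hR]; exact Finset.disjoint_sdiff
  have hcards : T.n = L.card + A.card + R.card := by
    have h1 := congrArg Finset.card hunion
    rw [Finset.card_union_of_disjoint hdisj2,
      Finset.card_union_of_disjoint hdisj, Finset.card_univ, Fintype.card_fin] at h1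
    omega
  have hedge : T.G.edgeFinset.card + 1 = T.n := by
    have := T.isTree.card_edgeFinset
    simpa using this
  have hdegsum : ∑ v, (T.deg v : ℤ) = 2 * ((T.n : ℤ) - 1) := by
    have h1 : ∑ v, T.deg v = 2 * T.G.edgeFinset.card := by
      exact SimpleGraph.sum_degrees_eq_twice_card_edges T.G
    have h2 : ((∑ v, T.deg v : ℕ) : ℤ) = ∑ v, (T.deg v : ℤ) := by push_cast; rfl
    rw [← h2, h1]
    push_cast
    omega
  -- leaf sums
  have hLdeg : ∑ v ∈ L, (T.deg v : ℤ) = L.card := by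
    rw [Finset.sum_congr rfl (fun v hv => ?_), Finset.sum_const, nsmul_eq_mul, mul_one]
    rw [hL, Finset.mem_filter] at hv
    rw [hv.2]
    norm_num
  have hLsdeg : ∑ v ∈ L, T.sdeg v = L.card := by
    rw [Finset.sum_congr rfl (fun v hv => ?_), Finset.sum_const, nsmul_eq_mul, mul_one]
    rw [hL, Finset.mem_filter] at hv
    exact leaf v hv.2
  have hAdeg : ∑ x ∈ X, x ≤ ∑ v ∈ A, (T.deg v : ℤ) := by
    rw [← hsumA]
    refine Finset.sum_le_sum fun v _ => ?_
    have hd := T.deg_eq v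
    have hs := T.sdeg_eq v
    omega
  have hRdeg : 2 * (R.card : ℤ) ≤ ∑ v ∈ R, (T.deg v : ℤ) := by
    have hb : ∀ v ∈ R, (2:ℤ) ≤ (T.deg v : ℤ) := by
      intro v hv
      have h1 := T.one_le_deg hn2 v
      have hne : T.deg v ≠ 1 := by
        intro h
        apply (Finset.mem_sdiff.mp (by rw [← hR]; exact hv)).2
        exact Finset.mem_union_left _ (by rw [hL]; simp [h])
      have : 2 ≤ T.deg v := by omega
      exact_mod_cast this
    calc 2 * (R.card : ℤ) = ∑ _v ∈ R, (2:ℤ) := by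
          rw [Finset.sum_const, nsmul_eq_mul]; ring
      _ ≤ _ := Finset.sum_le_sum hb
  have hRsdeg : 0 ≤ ∑ v ∈ R, T.sdeg v := Finset.sum_nonneg fun v _ => nonneg v
  have hdeg_split := hsplit (fun v => (T.deg v : ℤ))
  have hsdeg_split := hsplit T.sdeg
  rw [hdegsum] at hdeg_split
  rw [hsdeg_split, hLsdeg]
  rw [hLdeg] at hdeg_split
  have hcardA' : (A.card : ℤ) = X.card := by exact_mod_cast hcardA
  have hcards' : (T.n : ℤ) = L.card + A.card + R.card := by exact_mod_cast hcards
  linarith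

section Ext

variable (T : SignedTree) (v : Fin T.n)

/-- projection used for the sign function of the extension -/
def proj (a : Fin (T.n + 1)) : Fin T.n :=
  if h : (a : ℕ) < T.n then ⟨a, h⟩ else v

lemma proj_castSucc (w : Fin T.n) : T.proj v w.castSucc = w := by
  unfold proj
  rw [dif_pos (by simpa using w.isLt)]
  ext
  simp

/-- the underlying graph of the one-leaf extension at `v` -/
def extG : SimpleGraph (Fin (T.n + 1)) where
  Adj a c := (∃ a' c', T.G.Adj a' c' ∧ a = a'.castSucc ∧ c = c'.castSucc) ∨
    (a = v.castSucc ∧ c = Fin.last T.n) ∨ (a = Fin.last T.n ∧ c = v.castSucc)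
  symm := ⟨by
    rintro a c (⟨a', c', h, rfl, rfl⟩ | ⟨rfl, rfl⟩ | ⟨rfl, rfl⟩)
    · exact Or.inl ⟨c', a', h.symm, rfl, rfl⟩
    · exact Or.inr (Or.inr ⟨rfl, rfl⟩)
    · exact Or.inr (Or.inl ⟨rfl, rfl⟩)⟩
  loopless := ⟨by
    intro a h
    rcases h with ⟨a', c', hadj, h1, h2⟩ | ⟨h1, h2⟩ | ⟨h1, h2⟩
    · have : a' = c' := Fin.castSucc_inj.mp (h1.symm.trans h2)
      exact T.G.loopless.irrefl a' (this ▸ hadj)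
    · exact absurd (h1.symm.trans h2) (Fin.castSucc_lt_last v).ne
    · exact absurd (h1.symm.trans h2) (Fin.castSucc_lt_last v).ne'⟩

lemma extG_adj_cast {a c : Fin T.n} : (extG T v).Adj a.castSucc c.castSucc ↔ T.G.Adj a c := by
  constructor
  · rintro (⟨a', c', h, h1, h2⟩ | ⟨h1, h2⟩ | ⟨h1, h2⟩)
    · rwa [Fin.castSucc_inj.mp h1, Fin.castSucc_inj.mp h2]
    · exact absurd h2 (Fin.castSucc_lt_last c).ne
    · exact absurd h1 (Fin.castSucc_lt_last a).ne
  · intro h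
    exact Or.inl ⟨a, c, h, rfl, rfl⟩

lemma extG_adj_cast_last {a : Fin T.n} :
    (extG T v).Adj a.castSucc (Fin.last T.n) ↔ a = v := by
  constructor
  · rintro (⟨a', c', h, h1, h2⟩ | ⟨h1, h2⟩ | ⟨h1, h2⟩)
    · exact absurd h2.symm (Fin.castSucc_lt_last c').ne
    · exact Fin.castSucc_inj.mp h1
    · exact absurd h1 (Fin.castSucc_lt_last a).ne
  · rintro rfl
    exact Or.inr (Or.inl ⟨rfl, rfl⟩)

lemma extG_adj_last {c : Fin (T.n + 1)} :
    (extG T v).Adj (Fin.last T.n) c ↔ c = v.castSucc := by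
  constructor
  · rintro (⟨a', c', h, h1, h2⟩ | ⟨h1, h2⟩ | ⟨h1, h2⟩)
    · exact absurd h1.symm (Fin.castSucc_lt_last a').ne
    · exact absurd h1.symm (Fin.castSucc_lt_last v).ne
    · exact h2
  · rintro rfl
    exact Or.inr (Or.inr ⟨rfl, rfl⟩)

/-- the embedding hom -/
def extHom : T.G →g extG T v :=
  ⟨Fin.castSucc, fun h => Or.inl ⟨_, _, h, rfl, rfl⟩⟩

lemma extG_connected : (extG T v).Connected := by
  rw [SimpleGraph.connected_iff]
  refine ⟨fun a c => ?_, ⟨Fin.last T.n⟩⟩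
  have key : ∀ a : Fin (T.n + 1), (extG T v).Reachable a v.castSucc := by
    intro a
    refine Fin.lastCases ?_ ?_ a
    · exact ((extG_adj_last T v).mpr rfl).reachable
    · intro w
      exact (T.isTree.isConnected.preconnected w v).map (extHom T v)
  exact (key a).trans (key c).symm

lemma ext_pull {a0 c0 : Fin (T.n + 1)} (p : (extG T v).Walk a0 c0) :
    Fin.last T.n ∉ p.support → ∀ {a c : Fin T.n} (ha : a0 = a.castSucc)
      (hc : c0 = c.castSucc), ∃ q : T.G.Walk a c, p.copy ha hc = q.map (extHom T v) := by
  induction p with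
  | nil =>
    intro hp a c ha hc
    have hac : a = c := Fin.castSucc_inj.mp (ha.symm.trans hc)
    subst hac
    subst ha
    rw [Subsingleton.elim hc (rfl : a.castSucc = a.castSucc)]
    exact ⟨SimpleGraph.Walk.nil, rfl⟩
  | @cons u m w h p' ih =>
    intro hp a c ha hc
    have hm : m ≠ Fin.last T.n := by
      intro hEq
      exact hp (by rw [SimpleGraph.Walk.support_cons]
                   exact List.mem_cons_of_mem _ (hEq ▸ p'.start_mem_support))
    obtain ⟨m', rfl⟩ : ∃ m', m = m'.castSucc :=
      ⟨m.castPred hm, (Fin.castSucc_castPred m hm).symm⟩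
    have hadj : T.G.Adj a m' := by
      have h2 := h
      rw [ha] at h2
      exact (extG_adj_cast T v).mp h2
    have hp' : Fin.last T.n ∉ p'.support := fun hh =>
      hp (by rw [SimpleGraph.Walk.support_cons]; exact List.mem_cons_of_mem _ hh)
    obtain ⟨q, hq⟩ := ih hp' rfl hc
    refine ⟨SimpleGraph.Walk.cons hadj q, ?_⟩
    subst ha
    rw [SimpleGraph.Walk.copy_cons, SimpleGraph.Walk.map_cons, hq]
    rfl

lemma extG_acyclic : (extG T v).IsAcyclic := by
  intro u c hc
  by_cases hlast : Fin.last T.n ∈ c.support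
  · have hc' := hc.rotate hlast
    set c' := c.rotate (Fin.last T.n) hlast with hc'def
    clear_value c'
    have hnn : ¬ c'.Nil := hc'.not_nil
    rw [SimpleGraph.Walk.not_nil_iff] at hnn
    obtain ⟨x, hadj1, p, rfl⟩ := hnn
    have hx : x = v.castSucc := (extG_adj_last T v).mp hadj1
    subst hx
    have hpp : p.IsPath := ((SimpleGraph.Walk.cons_isCycle_iff p hadj1).mp hc').1
    have hrev : p.reverse.IsPath := hpp.reverse
    have hrnn : ¬ p.reverse.Nil := by
      rw [SimpleGraph.Walk.not_nil_iff_lt_length, SimpleGraph.Walk.length_reverse]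
      have h3 := hc'.three_le_length
      rw [SimpleGraph.Walk.length_cons] at h3
      omega
    rw [SimpleGraph.Walk.not_nil_iff] at hrnn
    obtain ⟨y, hadj2, q, hq⟩ := hrnn
    have hy : y = v.castSucc := (extG_adj_last T v).mp hadj2
    subst hy
    have hqpath : q.IsPath := by
      rw [hq] at hrev
      exact hrev.of_cons
    have hqnil : q = SimpleGraph.Walk.nil := by
      rwa [SimpleGraph.Walk.isPath_iff_eq_nil] at hqpath
    have hlen : p.reverse.length = 1 := by
      rw [hq, SimpleGraph.Walk.length_cons, hqnil, SimpleGraph.Walk.length_nil]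
    have h3 := hc'.three_le_length
    rw [SimpleGraph.Walk.length_cons] at h3
    rw [SimpleGraph.Walk.length_reverse] at hlen
    omega
  · have hu : u ≠ Fin.last T.n := fun hEq => hlast (hEq ▸ c.start_mem_support)
    have huu : u = (u.castPred hu).castSucc := (Fin.castSucc_castPred u hu).symm
    obtain ⟨q, hq⟩ := ext_pull T v c hlast huu huu
    have hcc : (c.copy huu huu).IsCycle := by rwa [SimpleGraph.Walk.isCycle_copy]
    rw [hq] at hcc
    have hqc : q.IsCycle :=
      (SimpleGraph.Walk.map_isCycle_iff_of_injective
        (Fin.castSucc_injective T.n)).mp hcc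
    exact T.isTree.IsAcyclic q hqc

/-- the one-leaf extension of a signed tree at `v`, new edge signed `b` -/
@[reducible] noncomputable def ext (b : Bool) : SignedTree where
  n := T.n + 1
  G := extG T v
  adjDec := Classical.decRel _
  isTree := ⟨extG_connected T v, extG_acyclic T v⟩
  sgn := fun e => if Fin.last T.n ∈ e then b else T.sgn (e.map (T.proj v))

variable (b : Bool)

@[simp] lemma ext_n : (ext T v b).n = T.n + 1 := rfl

lemma ext_sgn_cast (x y : Fin T.n) :
    (ext T v b).sgn s(x.castSucc, y.castSucc) = T.sgn s(x, y) := by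
  show (if Fin.last T.n ∈ s(x.castSucc, y.castSucc) then b
    else T.sgn (Sym2.map (T.proj v) s(x.castSucc, y.castSucc))) = T.sgn s(x, y)
  rw [if_neg, Sym2.map_pair_eq, proj_castSucc, proj_castSucc]
  rw [Sym2.mem_iff]
  push_neg
  exact ⟨(Fin.castSucc_lt_last x).ne', (Fin.castSucc_lt_last y).ne'⟩

lemma ext_sgn_mem (e : Sym2 (Fin (T.n + 1))) (h : Fin.last T.n ∈ e) :
    (ext T v b).sgn e = b := if_pos h

lemma ext_count (u : Fin T.n) (t : Bool) :
    {w | (ext T v b).G.Adj u.castSucc w ∧ (ext T v b).sgn s(u.castSucc, w) = t}.ncard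
      = {w | T.G.Adj u w ∧ T.sgn s(u, w) = t}.ncard + (if u = v ∧ b = t then 1 else 0) := by
  have hset : {w | (ext T v b).G.Adj u.castSucc w ∧ (ext T v b).sgn s(u.castSucc, w) = t}
      = Fin.castSucc '' {w | T.G.Adj u w ∧ T.sgn s(u, w) = t}
        ∪ (if u = v ∧ b = t then {Fin.last T.n} else ∅) := by
    ext w
    refine Fin.lastCases ?_ ?_ w
    · simp only [Set.mem_setOf_eq, Set.mem_union, Set.mem_image]
      constructor
      · rintro ⟨h1, h2⟩
        have hu : u = v := (extG_adj_cast_last T v).mp h1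
        have hb : b = t := by
          simpa using h2
        rw [if_pos ⟨hu, hb⟩]
        right; exact rfl
      · rintro (⟨w', _, hw'⟩ | h)
        · exact absurd hw' (Fin.castSucc_lt_last w').ne
        · by_cases hc : u = v ∧ b = t
          · rcases hc with ⟨rfl, rfl⟩
            refine ⟨(extG_adj_cast_last T u).mpr rfl, ?_⟩
            exact ext_sgn_mem T u b _ (by rw [Sym2.mem_iff]; right; rfl)
          · rw [if_neg hc] at h
            exact absurd h (Set.notMem_empty _)
    · intro w'
      simp only [Set.mem_setOf_eq, Set.mem_union, Set.mem_image]
      constructor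
      · rintro ⟨h1, h2⟩
        left
        refine ⟨w', ⟨(extG_adj_cast T v).mp h1, ?_⟩, rfl⟩
        exact (ext_sgn_cast T v b u w').symm.trans h2
      · rintro (⟨w'', ⟨ha, hs⟩, hw⟩ | h)
        · have : w'' = w' := Fin.castSucc_inj.mp hw
          subst this
          refine ⟨(extG_adj_cast T v).mpr ha, ?_⟩
          exact (ext_sgn_cast T v b u w'').trans hs
        · by_cases hc : u = v ∧ b = t
          · rw [if_pos hc] at h
            exact absurd h (Fin.castSucc_lt_last w').ne
          · rw [if_neg hc] at h
            exact absurd h (Set.notMem_empty _)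
  rw [hset, Set.ncard_union_eq, Set.ncard_image_of_injective _ (Fin.castSucc_injective T.n)]
  · congr 1
    by_cases hc : u = v ∧ b = t
    · rw [if_pos hc, if_pos hc, Set.ncard_singleton]
    · rw [if_neg hc, if_neg hc, Set.ncard_empty]
  · by_cases hc : u = v ∧ b = t
    · rw [if_pos hc, Set.disjoint_right]
      rintro e rfl
      rintro ⟨w', -, hw'⟩
      exact (Fin.castSucc_lt_last w').ne hw'
    · rw [if_neg hc]
      simp

lemma ext_sdeg_cast (u : Fin T.n) :
    (ext T v b).sdeg u.castSucc
      = T.sdeg u + (if u = v then (if b then 1 else -1) else 0) := by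
  rw [sdeg_eq, sdeg_eq]
  unfold posn negn
  rw [ext_count, ext_count]
  by_cases hu : u = v
  · subst hu
    cases b <;> simp <;> ring
  · simp [hu]

lemma ext_sdeg_last :
    (ext T v b).sdeg (Fin.last T.n) = if b then 1 else -1 := by
  rw [sdeg_eq]
  unfold posn negn
  have key : ∀ t : Bool, {w | (ext T v b).G.Adj (Fin.last T.n) w
      ∧ (ext T v b).sgn s(Fin.last T.n, w) = t}.ncard = if b = t then 1 else 0 := by
    intro t
    have : {w | (ext T v b).G.Adj (Fin.last T.n) w ∧ (ext T v b).sgn s(Fin.last T.n, w) = t}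
        = if b = t then {v.castSucc} else ∅ := by
      ext w
      simp only [Set.mem_setOf_eq]
      constructor
      · rintro ⟨h1, h2⟩
        have hw : w = v.castSucc := (extG_adj_last T v).mp h1
        have hb : b = t := by
          simpa using h2
        rw [if_pos hb, hw]
        exact rfl
      · intro h
        by_cases hb : b = t
        · rw [if_pos hb] at h
          have hw : w = v.castSucc := h
          subst hw
          refine ⟨(extG_adj_last T v).mpr rfl, ?_⟩
          simpa using hb
        · rw [if_neg hb] at h
          exact absurd h (Set.notMem_empty _)
    rw [this]
    by_cases hb : b = t
    · rw [if_pos hb, if_pos hb, Set.ncard_singleton]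
    · rw [if_neg hb, if_neg hb, Set.ncard_empty]
  rw [key true, key false]
  cases b <;> simp

end Ext

section Construction

/-- the one-vertex signed tree -/
@[reducible] def T1 : SignedTree where
  n := 1
  G := ⊥
  adjDec := fun _ _ => Decidable.isFalse id
  isTree := by
    constructor
    · rw [SimpleGraph.connected_iff]
      exact ⟨fun a b => by rw [Subsingleton.elim a b], ⟨0⟩⟩
    · exact SimpleGraph.isAcyclic_bot
  sgn := fun _ => true

lemma T1_sdeg (w : Fin T1.n) : T1.sdeg w = 0 := by
  rw [sdeg_eq]
  unfold posn negn
  have h1 : {x | T1.G.Adj w x ∧ T1.sgn s(w, x) = true} = ∅ := by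
    ext x; exact ⟨fun h => False.elim h.1, fun h => False.elim h⟩
  have h2 : {x | T1.G.Adj w x ∧ T1.sgn s(w, x) = false} = ∅ := by
    ext x; exact ⟨fun h => False.elim h.1, fun h => False.elim h⟩
  rw [h1, h2, Set.ncard_empty]
  simp

/-- invariant for the outer induction -/
def Good (R : Set ℤ) (N : ℤ) : Prop :=
  ∃ (T : SignedTree) (v : Fin T.n), T.sdeg v = 1 ∧ (∀ w, w ≠ v → T.sdeg w ∈ R) ∧
    (∀ r ∈ R, ∃ w, w ≠ v ∧ T.sdeg w = r) ∧ (T.n : ℤ) = N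

/-- invariant for the inner (pumping) induction -/
def GoodJ (R : Set ℤ) (N : ℤ) (t : ℕ) : Prop :=
  ∃ (T : SignedTree) (v z : Fin T.n), v ≠ z ∧ T.sdeg v = 1 + t ∧ T.sdeg z = 1 ∧
    (∀ w, w ≠ v → w ≠ z → T.sdeg w ∈ R) ∧
    (∀ r ∈ R, ∃ w, w ≠ v ∧ w ≠ z ∧ T.sdeg w = r) ∧ (T.n : ℤ) = N + t

@[reducible] noncomputable def bT2 : SignedTree := ext T1 ⟨0, Nat.one_pos⟩ true
@[reducible] noncomputable def bT3 : SignedTree := ext bT2 (Fin.last T1.n) false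
@[reducible] noncomputable def bT4 : SignedTree := ext bT3 (Fin.last bT2.n) true

lemma bs3 : bT4.sdeg (Fin.last bT3.n) = 1 := by
  show (ext bT3 (Fin.last bT2.n) true).sdeg (Fin.last bT3.n) = 1
  rw [ext_sdeg_last]; simp

lemma bs2 : bT4.sdeg ((Fin.last bT2.n).castSucc) = 0 := by
  show (ext bT3 (Fin.last bT2.n) true).sdeg ((Fin.last bT2.n).castSucc) = 0
  rw [ext_sdeg_cast, if_pos rfl]
  have h : bT3.sdeg (Fin.last bT2.n) = -1 := by
    show (ext bT2 (Fin.last T1.n) false).sdeg (Fin.last bT2.n) = -1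
    rw [ext_sdeg_last]; simp
  rw [h]; simp

lemma bs1 : bT4.sdeg (((Fin.last T1.n).castSucc).castSucc) = 0 := by
  show (ext bT3 (Fin.last bT2.n) true).sdeg (((Fin.last T1.n).castSucc).castSucc) = 0
  rw [ext_sdeg_cast, if_neg ((Fin.castSucc_lt_last (n := bT2.n) _).ne)]
  have h : bT3.sdeg ((Fin.last T1.n).castSucc) = 0 := by
    show (ext bT2 (Fin.last T1.n) false).sdeg ((Fin.last T1.n).castSucc) = 0
    rw [ext_sdeg_cast, if_pos rfl]
    have h2 : bT2.sdeg (Fin.last T1.n) = 1 := by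
      show (ext T1 ⟨0, Nat.one_pos⟩ true).sdeg (Fin.last T1.n) = 1
      rw [ext_sdeg_last]; simp
    rw [h2]; simp
  rw [h]; simp

lemma bs0 : bT4.sdeg ((((⟨0, Nat.one_pos⟩ : Fin T1.n).castSucc).castSucc).castSucc) = 1 := by
  show (ext bT3 (Fin.last bT2.n) true).sdeg
    ((((⟨0, Nat.one_pos⟩ : Fin T1.n).castSucc).castSucc).castSucc) = 1
  rw [ext_sdeg_cast, if_neg ((Fin.castSucc_lt_last (n := bT2.n) _).ne)]
  have h : bT3.sdeg (((⟨0, Nat.one_pos⟩ : Fin T1.n).castSucc).castSucc) = 1 := by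
    show (ext bT2 (Fin.last T1.n) false).sdeg
      (((⟨0, Nat.one_pos⟩ : Fin T1.n).castSucc).castSucc) = 1
    rw [ext_sdeg_cast, if_neg ((Fin.castSucc_lt_last (n := T1.n) _).ne)]
    have h2 : bT2.sdeg ((⟨0, Nat.one_pos⟩ : Fin T1.n).castSucc) = 1 := by
      show (ext T1 ⟨0, Nat.one_pos⟩ true).sdeg ((⟨0, Nat.one_pos⟩ : Fin T1.n).castSucc) = 1
      rw [ext_sdeg_cast, if_pos rfl, T1_sdeg]; simp
    rw [h2]; simp
  rw [h]; simp

lemma base_good : Good (insert 1 (insert 0 (∅ : Set ℤ))) 4 := by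
  classical
  have hall : ∀ w : Fin bT4.n,
      w = (((⟨0, Nat.one_pos⟩ : Fin T1.n).castSucc).castSucc).castSucc ∨
      w = ((Fin.last T1.n).castSucc).castSucc ∨ w = (Fin.last bT2.n).castSucc ∨
      w = Fin.last bT3.n := by
    intro w
    refine Fin.lastCases ?_ ?_ w
    · right; right; right; rfl
    · intro w1
      refine Fin.lastCases ?_ ?_ w1
      · right; right; left; rfl
      · intro w2
        refine Fin.lastCases ?_ ?_ w2
        · right; left; rfl
        · intro w3
          left
          have hw3 : w3 = (⟨0, Nat.one_pos⟩ : Fin T1.n) := by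
            apply Fin.ext
            have h1 : w3.val < 1 := w3.isLt
            show w3.val = 0
            omega
          rw [hw3]
  refine ⟨bT4, Fin.last bT3.n, bs3, ?_, ?_, ?_⟩
  · intro w hw
    rcases hall w with h | h | h | h
    · rw [h, bs0]; simp
    · rw [h, bs1]; simp
    · rw [h, bs2]; simp
    · exact absurd h hw
  · intro r hr
    simp only [Set.mem_insert_iff, Set.mem_empty_iff_false, or_false] at hr
    rcases hr with rfl | rfl
    · exact ⟨_, (Fin.castSucc_lt_last _).ne, bs0⟩
    · exact ⟨_, (Fin.castSucc_lt_last _).ne, bs2⟩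
  · show ((4 : ℕ) : ℤ) = 4
    norm_num

lemma step0 {R : Set ℤ} {N : ℤ} (h : Good R N) : GoodJ R N 1 := by
  obtain ⟨T, v, hv1, hall, hwit, hn⟩ := h
  refine ⟨ext T v true, v.castSucc, Fin.last T.n, (Fin.castSucc_lt_last v).ne,
    ?_, ?_, ?_, ?_, ?_⟩
  · rw [ext_sdeg_cast, if_pos rfl, hv1]; simp
  · rw [ext_sdeg_last]; simp
  · intro w hwv hwz
    induction w using Fin.lastCases with
    | last => exact absurd rfl hwz
    | cast u =>
      have hne : u ≠ v := fun hEq => hwv (by rw [hEq])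
      rw [ext_sdeg_cast, if_neg hne, add_zero]
      exact hall u hne
  · intro r hr
    obtain ⟨w, hwv, hws⟩ := hwit r hr
    refine ⟨w.castSucc, fun hEq => hwv (Fin.castSucc_inj.mp hEq),
      (Fin.castSucc_lt_last w).ne, ?_⟩
    rw [ext_sdeg_cast, if_neg hwv, add_zero, hws]
  · show ((T.n + 1 : ℕ) : ℤ) = N + 1
    push_cast
    omega

lemma stepJ {R : Set ℤ} {N : ℤ} {t : ℕ} (h1R : (1 : ℤ) ∈ R) (h : GoodJ R N t) :
    GoodJ R N (t + 1) := by
  obtain ⟨T, v, z, hvz, hv, hz1, hall, hwit, hn⟩ := h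
  refine ⟨ext T v true, v.castSucc, Fin.last T.n, (Fin.castSucc_lt_last v).ne,
    ?_, ?_, ?_, ?_, ?_⟩
  · rw [ext_sdeg_cast, if_pos rfl, hv]
    simp
    push_cast
    ring
  · rw [ext_sdeg_last]; simp
  · intro w hwv hwz
    induction w using Fin.lastCases with
    | last => exact absurd rfl hwz
    | cast u =>
      have hne : u ≠ v := fun hEq => hwv (by rw [hEq])
      rw [ext_sdeg_cast, if_neg hne, add_zero]
      by_cases huz : u = z
      · rw [huz, hz1]; exact h1R
      · exact hall u hne huz
  · intro r hr
    obtain ⟨w, hwv, hwz, hws⟩ := hwit r hr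
    refine ⟨w.castSucc, fun hEq => hwv (Fin.castSucc_inj.mp hEq),
      (Fin.castSucc_lt_last w).ne, ?_⟩
    rw [ext_sdeg_cast, if_neg hwv, add_zero, hws]
  · show ((T.n + 1 : ℕ) : ℤ) = N + (t + 1 : ℕ)
    push_cast
    push_cast at hn
    omega

lemma closeJ {R : Set ℤ} {N : ℤ} {t : ℕ} {x : ℤ} (hx : x = 1 + t) (h : GoodJ R N t) :
    Good (insert x R) (N + t) := by
  obtain ⟨T, v, z, hvz, hv, hz1, hall, hwit, hn⟩ := h
  refine ⟨T, z, hz1, ?_, ?_, hn⟩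
  · intro w hwz
    by_cases hwv : w = v
    · rw [hwv, hv, ← hx]; exact Set.mem_insert x R
    · exact Set.mem_insert_of_mem x (hall w hwv hwz)
  · intro r hr
    rcases Set.mem_insert_iff.mp hr with rfl | hrR
    · exact ⟨v, hvz, by rw [hv, hx]⟩
    · obtain ⟨w, _, hwz, hws⟩ := hwit r hrR
      exact ⟨w, hwz, hws⟩

lemma pumpJ {R : Set ℤ} {N : ℤ} (h1R : (1 : ℤ) ∈ R) (h : Good R N) :
    ∀ t : ℕ, 1 ≤ t → GoodJ R N t := by
  intro t ht
  induction t with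
  | zero => omega
  | succ t ih =>
    rcases Nat.eq_or_lt_of_le ht with h1 | h2
    · have ht0 : t = 0 := by omega
      subst ht0
      exact step0 h
    · exact stepJ h1R (ih (by omega))

lemma good_X : ∀ X : Finset ℤ, (∀ x ∈ X, 1 < x) →
    Good (insert 1 (insert 0 (↑X : Set ℤ))) ((∑ x ∈ X, x) + 4 - X.card) := by
  intro X
  induction X using Finset.induction_on with
  | empty =>
    intro _
    simpa using base_good
  | @insert a s ha ih =>
    intro hx
    have hx' : ∀ y ∈ s, 1 < y := fun y hy => hx y (Finset.mem_insert_of_mem hy)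
    have hGood := ih hx'
    have ha2 : 2 ≤ a := hx a (Finset.mem_insert_self a s)
    set t : ℕ := (a - 1).toNat with htdef
    have htc : (t : ℤ) = a - 1 := Int.toNat_of_nonneg (by omega)
    have ht1 : 1 ≤ t := by omega
    have h1R : (1 : ℤ) ∈ insert 1 (insert 0 (↑s : Set ℤ)) := Set.mem_insert 1 _
    have hJ := pumpJ h1R hGood t ht1
    have hG2 := closeJ (x := a) (by omega) hJ
    have hsets : insert a (insert 1 (insert 0 (↑s : Set ℤ)))
        = insert 1 (insert 0 (↑(insert a s) : Set ℤ)) := by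
      rw [Finset.coe_insert, Set.insert_comm a 1, Set.insert_comm a 0]
    rw [hsets] at hG2
    have hnum : (∑ x ∈ s, x) + 4 - (s.card : ℤ) + t
        = (∑ x ∈ insert a s, x) + 4 - ((insert a s).card : ℤ) := by
      rw [Finset.sum_insert ha, Finset.card_insert_of_notMem ha]
      push_cast
      omega
    rwa [hnum] at hG2

lemma exists_small (X : Finset ℤ) (hx : ∀ x ∈ X, 1 < x) :
    ∃ T' : SignedTree, T'.Realizes (insert 1 (insert 0 (↑X : Set ℤ)))
      ∧ (T'.n : ℤ) = (∑ x ∈ X, x) + 4 - X.card := by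
  obtain ⟨T, v, hv1, hall, hwit, hn⟩ := good_X X hx
  refine ⟨T, ?_, hn⟩
  unfold Realizes
  ext d
  constructor
  · intro hd
    obtain ⟨w, _, hws⟩ := hwit d hd
    exact ⟨w, hws⟩
  · rintro ⟨w, rfl⟩
    by_cases hwv : w = v
    · rw [hwv, hv1]; exact Set.mem_insert 1 _
    · exact hall w hwv

end Construction

end SignedTree

/-- In an order-optimal signed tree realizing `D = {1, 0} ∪ X`
(`X` a set of distinct integers each greater than 1), there is exactly one negative edge. -/
theorem stmt_13 (X : Finset ℤ) (hx : ∀ x ∈ X, 1 < x)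
    (D : Set ℤ) (hD : D = insert 1 (insert 0 (↑X : Set ℤ)))
    (T : SignedTree) (hreal : T.Realizes D)
    (hopt : ∀ T' : SignedTree, T'.Realizes D → T.n ≤ T'.n) :
    ∃! e : Sym2 (Fin T.n), e ∈ T.G.edgeSet ∧ T.sgn e = false := by
  classical
  subst hD
  have hsur : ∀ d ∈ insert (1:ℤ) (insert 0 (↑X : Set ℤ)), ∃ v, T.sdeg v = d := by
    intro d hd
    rw [hreal] at hd
    exact hd
  obtain ⟨v0, hv0⟩ := hsur 0 (by simp)
  obtain ⟨v1, hv1⟩ := hsur 1 (by simp)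
  have hn2 : 2 ≤ T.n := by
    have hne : v0 ≠ v1 := fun h => by rw [h, hv1] at hv0; exact one_ne_zero hv0
    have := Fintype.one_lt_card_iff.mpr ⟨v0, v1, hne⟩
    simp at this; omega
  have hneg : 1 ≤ T.negn v0 := by
    have hd := T.deg_eq v0
    have hs := T.sdeg_eq v0
    have h1 := T.one_le_deg hn2 v0
    rw [hv0] at hs
    omega
  have hnonempty : {w | T.G.Adj v0 w ∧ T.sgn s(v0, w) = false}.Nonempty := by
    refine (Set.ncard_pos (Set.toFinite _)).mp ?_
    unfold SignedTree.negn at hneg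
    omega
  obtain ⟨w0, hw0a, hw0s⟩ := hnonempty
  have huniq : ∀ e1 e2 : Sym2 (Fin T.n), (e1 ∈ T.G.edgeSet ∧ T.sgn e1 = false) →
      (e2 ∈ T.G.edgeSet ∧ T.sgn e2 = false) → e1 = e2 := by
    intro e1 e2 he1 he2
    by_contra hne
    have h2m : 2 ≤ T.negm := by
      have hsub : ({e1, e2} : Set (Sym2 (Fin T.n)))
          ⊆ {e | e ∈ T.G.edgeSet ∧ T.sgn e = false} := by
        intro e he
        rcases he with rfl | he
        · exact he1
        · rw [Set.mem_singleton_iff] at he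
          rw [he]
          exact he2
      calc 2 = ({e1, e2} : Set (Sym2 (Fin T.n))).ncard := (Set.ncard_pair hne).symm
        _ ≤ _ := Set.ncard_le_ncard hsub (Set.toFinite _)
    have hhs := T.sum_sdeg
    have hlb := SignedTree.lower_bound X hx T hreal
    obtain ⟨T', hT'real, hT'n⟩ := SignedTree.exists_small X hx
    have hle : T.n ≤ T'.n := hopt T' hT'real
    have hleZ : (T.n : ℤ) ≤ (∑ x ∈ X, x) + 4 - X.card := by
      rw [← hT'n]
      exact_mod_cast hle
    have h2mZ : (2 : ℤ) ≤ T.negm := by exact_mod_cast h2m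
    linarith [hhs, hlb]
  exact ⟨s(v0, w0), ⟨(SimpleGraph.mem_edgeSet T.G).mpr hw0a, hw0s⟩,
    fun y hy => huniq y s(v0, w0) hy ⟨(SimpleGraph.mem_edgeSet T.G).mpr hw0a, hw0s⟩⟩
end
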